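/- arXiv:1112.0582 — 8 statements merged into one kernel-verified Lean document; each statement's English description precedes it below -/
import Mathlib

section
/- Let w ∈ ℕ and let π : ℤ → ℤ be a bijection with |π(i) − i| ≤ w for all i ∈ ℤ. Then the window count n(j*) := #{ i ∈ ℤ : j* − w ≤ i ≤ j* + w − 1 and π(i) ≥ j* } is independent of j*: for all j₁, j₂ ∈ ℤ one has n(j₁) = n(j₂). -/
/-- For a bijection `π : ℤ → ℤ` of bandwidth at most `w`, the window count
`n(j*) = #{ i : j* - w ≤ i ≤ j* + w - 1, π(i) ≥ j* }` is independent of `j*`. -/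
theorem window_count_independent (w : ℕ) (π : ℤ ≃ ℤ)
    (hband : ∀ i : ℤ, |π i - i| ≤ (w : ℤ)) (j₁ j₂ : ℤ) :
    ((Finset.Icc (j₁ - w) (j₁ + w - 1)).filter (fun i => j₁ ≤ π i)).card =
    ((Finset.Icc (j₂ - w) (j₂ + w - 1)).filter (fun i => j₂ ≤ π i)).card := by
  set f : ℤ → ℕ :=
    fun j => ((Finset.Icc (j - w) (j + w - 1)).filter (fun i => j ≤ π i)).card with hf
  have hub : ∀ i : ℤ, π i - i ≤ w := fun i => (abs_le.mp (hband i)).2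
  have hlb : ∀ i : ℤ, -(w : ℤ) ≤ π i - i := fun i => (abs_le.mp (hband i)).1
  have step : ∀ j : ℤ, f j = f (j + 1) := by
    intro j
    set I : Finset ℤ := Finset.Icc (j - w) (j + w) with hI
    set T : Finset ℤ := I.filter (fun i => j ≤ π i) with hT
    have e1 : (Finset.Icc (j - w) (j + w - 1)).filter (fun i => j ≤ π i)
        = T.erase (j + w) := by
      ext i
      simp only [hf, hT, hI, Finset.mem_erase, Finset.mem_filter, Finset.mem_Icc]
      constructor
      · rintro ⟨⟨ha, hb⟩, hc⟩
        exact ⟨by omega, ⟨by omega, by omega⟩, hc⟩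
      · rintro ⟨hne, ⟨ha, hb⟩, hc⟩
        exact ⟨⟨ha, by omega⟩, hc⟩
    have e2 : (Finset.Icc (j + 1 - w) (j + 1 + w - 1)).filter (fun i => j + 1 ≤ π i)
        = T.erase (π.symm j) := by
      ext i
      simp only [hf, hT, hI, Finset.mem_erase, Finset.mem_filter, Finset.mem_Icc]
      constructor
      · rintro ⟨⟨ha, hb⟩, hc⟩
        refine ⟨fun h => ?_, ⟨?_, by omega⟩, by omega⟩
        · rw [h, π.apply_symm_apply] at hc; omega
        · have := hlb i; omega
      · rintro ⟨hne, ⟨ha, hb⟩, hc⟩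
        have hπ : π i ≠ j := fun h => hne (by rw [← h, π.symm_apply_apply])
        refine ⟨⟨?_, by omega⟩, by omega⟩
        have := hub i; omega
    simp only [hf]
    rw [e1, e2, Finset.card_erase_of_mem, Finset.card_erase_of_mem]
    · simp only [hT, hI, Finset.mem_filter, Finset.mem_Icc]
      have ha := hlb (π.symm j); have hb := hub (π.symm j)
      rw [π.apply_symm_apply] at ha hb
      refine ⟨⟨by omega, by omega⟩, ?_⟩
      rw [π.apply_symm_apply]
    · simp only [hT, hI, Finset.mem_filter, Finset.mem_Icc]
      have := hlb (j + w)
      exact ⟨⟨by omega, le_refl _⟩, by omega⟩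
  have key : ∀ j : ℤ, f j = f 0 := by
    intro j
    induction j using Int.induction_on with
    | zero => rfl
    | succ k ih => rw [← step (k : ℤ)]; exact ih
    | pred k ih =>
        rw [step (-(k : ℤ) - 1)]
        have h : (-(k : ℤ) - 1 + 1) = -(k : ℤ) := by ring
        rw [h]; exact ih
  show f j₁ = f j₂
  rw [key j₁, key j₂]
end

section
/- Let w ∈ ℕ, let π : ℤ → ℤ be a bijection with |π(i) − i| ≤ w for all i, and let P be its permutation operator on ℓ²(ℤ). Then the operator B := Q P Q + (I − Q) is Fredholm, and for every j* ∈ ℤ its index equals n − w, where n = #{ i ∈ ℤ : j* − w ≤ i ≤ j* + w − 1 and π(i) ≥ j* }. (Thus the plus-index of P is computable from any 2w consecutive rows of its matrix.) -/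
open scoped ENNReal


noncomputable section

/-- `ℓ²(ℤ)`, the Hilbert space of square-summable complex sequences indexed by `ℤ`. -/
abbrev H : Type := lp (fun _ : ℤ => ℂ) 2

/-- A bounded operator on a Hilbert space is Fredholm if its kernel is finite-dimensional
and its range is closed and of finite codimension. -/
def IsFredholm (T : H →L[ℂ] H) : Prop :=
  FiniteDimensional ℂ (LinearMap.ker (T : H →ₗ[ℂ] H)) ∧
  IsClosed (LinearMap.range (T : H →ₗ[ℂ] H) : Set H) ∧
  FiniteDimensional ℂ (H ⧸ LinearMap.range (T : H →ₗ[ℂ] H))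

/-- The Fredholm index `ind(T) = dim ker T − dim coker T`. -/
def fredholmIndex (T : H →L[ℂ] H) : ℤ :=
  (Module.finrank ℂ (LinearMap.ker (T : H →ₗ[ℂ] H)) : ℤ) -
  (Module.finrank ℂ (H ⧸ LinearMap.range (T : H →ₗ[ℂ] H)) : ℤ)

section Comb
variable (w : ℕ) (π : ℤ ≃ ℤ)

def Afin (j : ℤ) : Finset ℤ := (Finset.Icc (j - w) (j - 1)).filter (fun i => j ≤ π i)
def Cfin (j : ℤ) : Finset ℤ := (Finset.Icc j (j + w - 1)).filter (fun i => π i < j)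

variable {w π} (hband : ∀ i : ℤ, |π i - i| ≤ (w : ℤ))
include hband

theorem bandsymm (j : ℤ) : |π.symm j - j| ≤ (w : ℤ) := by
  have := hband (π.symm j); rw [Equiv.apply_symm_apply] at this
  rwa [abs_sub_comm] at this

theorem windowA {a j : ℤ} (ha : a ≤ j - w) :
    (Finset.Icc a (j-1)).filter (fun i => j ≤ π i) = Afin w π j := by
  ext i
  simp only [Afin, Finset.mem_filter, Finset.mem_Icc]
  constructor
  · rintro ⟨⟨-, h2⟩, h3⟩
    have hb := (abs_le.1 (hband i)).2
    exact ⟨⟨by omega, h2⟩, h3⟩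
  · rintro ⟨⟨h1, h2⟩, h3⟩
    exact ⟨⟨by omega, h2⟩, h3⟩

theorem windowC {b j : ℤ} (hb : j + w - 1 ≤ b) :
    (Finset.Icc j b).filter (fun i => π i < j) = Cfin w π j := by
  ext i
  simp only [Cfin, Finset.mem_filter, Finset.mem_Icc]
  constructor
  · rintro ⟨⟨h1, -⟩, h3⟩
    have hbd := (abs_le.1 (hband i)).1
    exact ⟨⟨h1, by omega⟩, h3⟩
  · rintro ⟨⟨h1, h2⟩, h3⟩
    exact ⟨⟨h1, by omega⟩, h3⟩

theorem stepA (j : ℤ) : ((Afin w π (j+1)).card : ℤ)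
    = ((Finset.Icc (j - w) (j-1)).filter (fun i => j + 1 ≤ π i)).card
      + (if j + 1 ≤ π j then 1 else 0) := by
  rw [← windowA hband (a := j - w) (j := j + 1) (by omega)]
  have hsplit : Finset.Icc (j - (w:ℤ)) (j + 1 - 1) = insert j (Finset.Icc (j - w) (j-1)) := by
    ext i; simp only [Finset.mem_Icc, Finset.mem_insert]; omega
  rw [hsplit, Finset.filter_insert]
  by_cases h : j + 1 ≤ π j
  · rw [if_pos h, Finset.card_insert_of_notMem (by simp [Finset.mem_filter]), if_pos h]
    push_cast; ring
  · rw [if_neg h, if_neg h]; simp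

theorem splitA (j : ℤ) : ((Afin w π j).card : ℤ)
    = ((Finset.Icc (j - w) (j-1)).filter (fun i => j + 1 ≤ π i)).card
      + (if π.symm j ≤ j - 1 then 1 else 0) := by
  have hU : Afin w π j
      = ((Finset.Icc (j - w) (j-1)).filter (fun i => j + 1 ≤ π i))
        ∪ ((Finset.Icc (j - w) (j-1)).filter (fun i => π i = j)) := by
    rw [← Finset.filter_or]
    apply Finset.filter_congr; intro i _
    constructor
    · intro h; omega
    · intro h; omega
  rw [hU, Finset.card_union_of_disjoint]
  · have hsg : (Finset.Icc (j - (w:ℤ)) (j-1)).filter (fun i => π i = j)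
        = if π.symm j ≤ j - 1 then {π.symm j} else ∅ := by
      ext i
      simp only [Finset.mem_filter, Finset.mem_Icc]
      constructor
      · rintro ⟨⟨h1, h2⟩, h3⟩
        have hi : i = π.symm j := by rw [← h3, Equiv.symm_apply_apply]
        subst hi
        simp [h2]
      · intro hi
        by_cases h : π.symm j ≤ j - 1
        · simp only [if_pos h, Finset.mem_singleton] at hi; subst hi
          have hbd := abs_le.1 (bandsymm hband j)
          exact ⟨⟨by omega, h⟩, by simp⟩
        · simp [h] at hi
    rw [hsg]
    by_cases h : π.symm j ≤ j - 1 <;> simp [h]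
  · rw [Finset.disjoint_left]
    intro i hi hj
    simp only [Finset.mem_filter] at hi hj
    omega

theorem stepC (j : ℤ) : ((Cfin w π (j+1)).card : ℤ)
    = ((Finset.Icc (j+1) (j + w)).filter (fun i => π i < j)).card
      + (if j + 1 ≤ π.symm j then 1 else 0) := by
  rw [← windowC hband (b := j + w) (j := j + 1) (by omega)]
  have hU : (Finset.Icc (j+1) (j + (w:ℤ))).filter (fun i => π i < j + 1)
      = ((Finset.Icc (j+1) (j + w)).filter (fun i => π i < j))
        ∪ ((Finset.Icc (j+1) (j + w)).filter (fun i => π i = j)) := by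
    rw [← Finset.filter_or]
    apply Finset.filter_congr; intro i _
    constructor
    · intro h; omega
    · intro h; omega
  rw [hU, Finset.card_union_of_disjoint]
  · have hsg : (Finset.Icc (j+1) (j + (w:ℤ))).filter (fun i => π i = j)
        = if j + 1 ≤ π.symm j then {π.symm j} else ∅ := by
      ext i
      simp only [Finset.mem_filter, Finset.mem_Icc]
      constructor
      · rintro ⟨⟨h1, h2⟩, h3⟩
        have hi : i = π.symm j := by rw [← h3, Equiv.symm_apply_apply]
        subst hi
        simp [h1]
      · intro hi
        by_cases h : j + 1 ≤ π.symm j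
        · simp only [if_pos h, Finset.mem_singleton] at hi; subst hi
          have hbd := abs_le.1 (bandsymm hband j)
          exact ⟨⟨h, by omega⟩, by simp⟩
        · simp [h] at hi
    rw [hsg]
    by_cases h : j + 1 ≤ π.symm j <;> simp [h]
  · rw [Finset.disjoint_left]
    intro i hi hj
    simp only [Finset.mem_filter] at hi hj
    omega

theorem splitC (j : ℤ) : ((Cfin w π j).card : ℤ)
    = ((Finset.Icc (j+1) (j + w)).filter (fun i => π i < j)).card
      + (if π j ≤ j - 1 then 1 else 0) := by
  rw [← windowC hband (b := j + w) (j := j) (by omega)]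
  have hsplit : Finset.Icc j (j + (w:ℤ)) = insert j (Finset.Icc (j+1) (j + w)) := by
    ext i; simp only [Finset.mem_Icc, Finset.mem_insert]
    constructor
    · intro h
      by_cases hij : i = j
      · left; exact hij
      · right; omega
    · intro h; rcases h with h | h
      · omega
      · omega
  rw [hsplit, Finset.filter_insert]
  by_cases h : π j < j
  · rw [if_pos h, Finset.card_insert_of_notMem (by simp [Finset.mem_filter]),
      if_pos (by omega : π j ≤ j - 1)]
    push_cast; ring
  · rw [if_neg h, if_neg (by omega : ¬ π j ≤ j - 1)]; simp

theorem stepAC (j : ℤ) :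
    ((Afin w π (j+1)).card : ℤ) - (Cfin w π (j+1)).card
      = ((Afin w π j).card : ℤ) - (Cfin w π j).card := by
  rw [stepA hband, stepC hband, splitA hband, splitC hband]
  have hfix : π j = j ↔ π.symm j = j := by
    constructor
    · intro h
      conv_lhs => rw [← h]
      simp
    · intro h
      conv_lhs => rw [← h]
      rw [Equiv.apply_symm_apply]
  by_cases h1 : π j = j <;> by_cases h2 : π.symm j = j
  · simp [h1, h2]
  · exact absurd (hfix.1 h1) h2
  · exact absurd (hfix.2 h2) h1
  · have e1 : (if j + 1 ≤ π j then (1:ℤ) else 0) + (if π j ≤ j - 1 then (1:ℤ) else 0) = 1 := by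
      split_ifs <;> omega
    have e2 : (if j + 1 ≤ π.symm j then (1:ℤ) else 0)
        + (if π.symm j ≤ j - 1 then (1:ℤ) else 0) = 1 := by
      split_ifs <;> omega
    omega

theorem constAC (j : ℤ) :
    ((Afin w π j).card : ℤ) - (Cfin w π j).card
      = ((Afin w π 1).card : ℤ) - (Cfin w π 1).card := by
  have key : ∀ j : ℤ, ((Afin w π j).card : ℤ) - (Cfin w π j).card
      = ((Afin w π 0).card : ℤ) - (Cfin w π 0).card := by
    intro j
    induction j using Int.induction_on with
    | zero => rfl
    | succ k ih => rw [stepAC hband, ih]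
    | pred k ih =>
        have hst := stepAC hband (-(k:ℤ) - 1)
        rw [show (-(k:ℤ) - 1) + 1 = -(k:ℤ) by ring] at hst
        rw [← hst]; exact ih
  rw [key j, ← key 1]

theorem nsplit (j : ℤ) :
    (((Finset.Icc (j - w) (j + w - 1)).filter (fun i => j ≤ π i)).card : ℤ)
      = ((Afin w π j).card : ℤ) + ((w : ℤ) - (Cfin w π j).card) := by
  have hU : (Finset.Icc (j - (w:ℤ)) (j + w - 1)).filter (fun i => j ≤ π i)
      = Afin w π j ∪ ((Finset.Icc j (j + w - 1)).filter (fun i => j ≤ π i)) := by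
    ext i
    simp only [Afin, Finset.mem_union, Finset.mem_filter, Finset.mem_Icc]
    constructor
    · rintro ⟨⟨h1, h2⟩, h3⟩
      by_cases h : i ≤ j - 1
      · left; exact ⟨⟨h1, h⟩, h3⟩
      · right; exact ⟨⟨by omega, h2⟩, h3⟩
    · rintro (⟨⟨h1, h2⟩, h3⟩ | ⟨⟨h1, h2⟩, h3⟩)
      · refine ⟨⟨h1, ?_⟩, h3⟩
        have : (0:ℤ) ≤ w := Int.ofNat_nonneg w
        omega
      · have hbd := (abs_le.1 (hband i)).2
        exact ⟨⟨by omega, h2⟩, h3⟩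
  have hpart : ((Finset.Icc j (j + (w:ℤ) - 1)).filter (fun i => j ≤ π i)).card
      + (Cfin w π j).card = w := by
    have hpn := Finset.card_filter_add_card_filter_not
      (s := Finset.Icc j (j + (w:ℤ) - 1)) (p := fun i => j ≤ π i)
    have hc : (Finset.Icc j (j + (w:ℤ) - 1)).card = w := by
      rw [Int.card_Icc]; omega
    have hCeq : (Finset.Icc j (j + (w:ℤ) - 1)).filter (fun i => ¬ j ≤ π i) = Cfin w π j := by
      apply Finset.filter_congr
      intro i _
      constructor
      · intro h; omega
      · intro h; omega
    rw [hCeq] at hpn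
    omega
  rw [hU, Finset.card_union_of_disjoint]
  · push_cast
    omega
  · rw [Finset.disjoint_left]
    intro i hi hj
    simp only [Afin, Finset.mem_filter, Finset.mem_Icc] at hi hj
    omega

end Comb


section Ops
variable {w : ℕ} {π : ℤ ≃ ℤ}
  (hband : ∀ i : ℤ, |π i - i| ≤ (w : ℤ))
  {P Q : H →L[ℂ] H}
  (hP : ∀ (x : H) (i : ℤ), P x i = x (π i))
  (hQ : ∀ (x : H) (i : ℤ), Q x i = if 1 ≤ i then x i else 0)

include hP hQ

theorem B_apply (x : H) (i : ℤ) :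
    (Q ∘L P ∘L Q + (1 - Q)) x i
      = if 1 ≤ i then (if 1 ≤ π i then x (π i) else 0) else x i := by
  have h1 : (Q ∘L P ∘L Q + (1 - Q)) x i = Q (P (Q x)) i + (x i - Q x i) := by
    simp [ContinuousLinearMap.add_apply, ContinuousLinearMap.comp_apply,
      ContinuousLinearMap.sub_apply, ContinuousLinearMap.one_apply]
  rw [h1, hQ, hQ]
  by_cases hi : 1 ≤ i
  · rw [if_pos hi, if_pos hi, if_pos hi, hP, hQ]
    ring
  · rw [if_neg hi, if_neg hi, if_neg hi]
    ring

theorem mem_ker_iff (x : H) :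
    (Q ∘L P ∘L Q + (1 - Q)) x = 0 ↔
      ∀ j : ℤ, ¬(1 ≤ j ∧ π.symm j ≤ 0) → x j = 0 := by
  constructor
  · intro hx j hj
    have hco : ∀ i : ℤ, (Q ∘L P ∘L Q + (1 - Q)) x i = 0 := by
      intro i; rw [hx]; rfl
    by_cases h1 : 1 ≤ j
    · have h2 : 1 ≤ π.symm j := by
        push_neg at hj
        have := hj h1; omega
      have := hco (π.symm j)
      rw [B_apply hP hQ, if_pos h2, Equiv.apply_symm_apply, if_pos h1] at this
      exact this
    · have := hco j
      rw [B_apply hP hQ, if_neg h1] at this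
      exact this
  · intro hx
    apply lp.ext
    funext i
    rw [lp.coeFn_zero, Pi.zero_apply, B_apply hP hQ]
    by_cases h1 : 1 ≤ i
    · rw [if_pos h1]
      by_cases h2 : 1 ≤ π i
      · rw [if_pos h2]
        apply hx
        rw [Equiv.symm_apply_apply]
        omega
      · rw [if_neg h2]
    · rw [if_neg h1]
      apply hx
      intro hc
      omega

end Ops

section Fins
variable (w : ℕ) (π : ℤ ≃ ℤ)

def Kfin : Finset ℤ := (Finset.Icc 1 (w:ℤ)).filter (fun j => π.symm j ≤ 0)
def Zfin : Finset ℤ := (Finset.Icc 1 (w:ℤ)).filter (fun i => π i ≤ 0)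

variable {w π}

theorem mem_Kfin (hband : ∀ i : ℤ, |π i - i| ≤ (w : ℤ)) (j : ℤ) :
    j ∈ Kfin w π ↔ 1 ≤ j ∧ π.symm j ≤ 0 := by
  simp only [Kfin, Finset.mem_filter, Finset.mem_Icc]
  constructor
  · rintro ⟨⟨h1, -⟩, h2⟩; exact ⟨h1, h2⟩
  · rintro ⟨h1, h2⟩
    have hb := abs_le.1 (bandsymm hband j)
    exact ⟨⟨h1, by omega⟩, h2⟩

theorem mem_Zfin (hband : ∀ i : ℤ, |π i - i| ≤ (w : ℤ)) (i : ℤ) :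
    i ∈ Zfin w π ↔ 1 ≤ i ∧ π i ≤ 0 := by
  simp only [Zfin, Finset.mem_filter, Finset.mem_Icc]
  constructor
  · rintro ⟨⟨h1, -⟩, h2⟩; exact ⟨h1, h2⟩
  · rintro ⟨h1, h2⟩
    have hb := abs_le.1 (hband i)
    exact ⟨⟨h1, by omega⟩, h2⟩

/-- a finitely supported element of `H` -/
theorem memℓp_of_finsupport (s : Finset ℤ) (f : ℤ → ℂ)
    (hf : ∀ j ∉ s, f j = 0) : Memℓp f 2 := by
  apply memℓp_gen
  apply summable_of_ne_finset_zero (s := s)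
  intro j hj
  rw [hf j hj]
  simp [Real.zero_rpow two_ne_zero]

end Fins

section Ker
variable {w : ℕ} {π : ℤ ≃ ℤ} {P Q : H →L[ℂ] H}

theorem ker_equiv_aux
    (hband : ∀ i : ℤ, |π i - i| ≤ (w : ℤ))
    (hP : ∀ (x : H) (i : ℤ), P x i = x (π i))
    (hQ : ∀ (x : H) (i : ℤ), Q x i = if 1 ≤ i then x i else 0) :
    ∃ _ : (LinearMap.ker ((Q ∘L P ∘L Q + (1 - Q) : H →L[ℂ] H) : H →ₗ[ℂ] H)) ≃ₗ[ℂ] (↥(Kfin w π) → ℂ), True := by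
  set B := ((Q ∘L P ∘L Q + (1 - Q) : H →L[ℂ] H) : H →ₗ[ℂ] H) with hBdef
  have hker : ∀ x : H, x ∈ LinearMap.ker B ↔ ∀ j : ℤ, j ∉ Kfin w π → x j = 0 := by
    intro x
    rw [LinearMap.mem_ker]
    rw [show (B x = 0) ↔ _ from mem_ker_iff hP hQ x]
    constructor
    · intro h j hj
      apply h
      intro hc
      exact hj ((mem_Kfin hband j).2 hc)
    · intro h j hj
      apply h
      rw [mem_Kfin hband]
      exact hj
  let R : (LinearMap.ker B) →ₗ[ℂ] (↥(Kfin w π) → ℂ) :=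
    { toFun := fun x j => (x : H) (j : ℤ)
      map_add' := fun x y => rfl
      map_smul' := fun c x => rfl }
  have hR : ∀ (x : LinearMap.ker B) (j : ↥(Kfin w π)), R x j = (x : H) (j : ℤ) := fun _ _ => rfl
  have hinj : Function.Injective R := by
    intro x y hxy
    apply Subtype.ext
    apply lp.ext
    funext j
    by_cases hj : j ∈ Kfin w π
    · have := congr_fun hxy ⟨j, hj⟩
      rwa [hR, hR] at this
    · rw [(hker x).1 x.2 j hj, (hker y).1 y.2 j hj]
  have hsurj : Function.Surjective R := by
    intro c
    set f : ℤ → ℂ := fun j => if h : j ∈ Kfin w π then c ⟨j, h⟩ else 0 with hf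
    have hmem : Memℓp f 2 := by
      apply memℓp_of_finsupport (Kfin w π)
      intro j hj
      simp [hf, hj]
    set x : H := ⟨f, hmem⟩ with hx
    have hxk : x ∈ LinearMap.ker B := by
      rw [hker]
      intro j hj
      show f j = 0
      simp [hf, hj]
    refine ⟨⟨x, hxk⟩, ?_⟩
    funext j
    rw [hR]
    show f (j : ℤ) = c j
    simp [hf, j.2]
  exact ⟨LinearEquiv.ofBijective R ⟨hinj, hsurj⟩, trivial⟩

end Ker

section Ran
variable {w : ℕ} {π : ℤ ≃ ℤ} {P Q : H →L[ℂ] H}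

theorem eval_continuous (k : ℤ) : Continuous (fun x : H => x k) := by
  have hlip : LipschitzWith 1 (fun x : H => x k) := by
    apply LipschitzWith.of_dist_le_mul
    intro x y
    rw [NNReal.coe_one, one_mul, dist_eq_norm, dist_eq_norm]
    have h1 : x k - y k = (x - y) k := by rw [lp.coeFn_sub]; rfl
    rw [h1]
    exact lp.norm_apply_le_norm (by norm_num) (x - y) k
  exact hlip.continuous

set_option maxHeartbeats 2000000 in
theorem range_equiv_aux
    (hband : ∀ i : ℤ, |π i - i| ≤ (w : ℤ))
    (hP : ∀ (x : H) (i : ℤ), P x i = x (π i))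
    (hQ : ∀ (x : H) (i : ℤ), Q x i = if 1 ≤ i then x i else 0) :
    ∃ _ : (H ⧸ LinearMap.range ((Q ∘L P ∘L Q + (1 - Q) : H →L[ℂ] H) : H →ₗ[ℂ] H)) ≃ₗ[ℂ] (↥(Zfin w π) → ℂ),
      IsClosed (LinearMap.range ((Q ∘L P ∘L Q + (1 - Q) : H →L[ℂ] H) : H →ₗ[ℂ] H) : Set H) := by
  set B := ((Q ∘L P ∘L Q + (1 - Q) : H →L[ℂ] H) : H →ₗ[ℂ] H) with hBdef
  let qmap : H →ₗ[ℂ] (↥(Zfin w π) → ℂ) :=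
    { toFun := fun x i => x (i : ℤ)
      map_add' := fun x y => rfl
      map_smul' := fun c x => rfl }
  have hq : ∀ (x : H) (i : ↥(Zfin w π)), qmap x i = x (i : ℤ) := fun _ _ => rfl
  -- range B = ker qmap
  have hrange : LinearMap.range B = LinearMap.ker qmap := by
    ext y
    simp only [LinearMap.mem_range, LinearMap.mem_ker]
    constructor
    · rintro ⟨x, rfl⟩
      funext i
      rw [hq]
      have hi := (mem_Zfin hband (i : ℤ)).1 i.2
      rw [show ((B x : H) (i:ℤ) = _) from B_apply hP hQ x (i:ℤ),
        if_pos hi.1, if_neg (by omega)]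
      rfl
    · intro hy
      have hy' : ∀ i : ℤ, i ∈ Zfin w π → y i = 0 := by
        intro i hi
        have := congr_fun hy ⟨i, hi⟩
        rwa [hq] at this
      set f : ℤ → ℂ := fun j =>
        if 1 ≤ j then (if 1 ≤ π.symm j then y (π.symm j) else 0) else y j with hf
      have ht0 : (2:ℝ≥0∞).toReal ≠ 0 := by norm_num
      have hmem : Memℓp f 2 := by
        apply memℓp_gen
        have hy2 : Summable (fun k : ℤ => ‖y k‖ ^ (2:ℝ≥0∞).toReal) :=
          (lp.memℓp y).summable (by norm_num)
        have hcomp : Summable (fun j : ℤ => ‖y (π.symm j)‖ ^ (2:ℝ≥0∞).toReal) :=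
          (Equiv.summable_iff π.symm).2 hy2
        apply Summable.of_nonneg_of_le
          (fun j => Real.rpow_nonneg (norm_nonneg _) _)
          (fun j => ?_) (hcomp.add hy2)
        by_cases h1 : 1 ≤ j
        · by_cases h2 : 1 ≤ π.symm j
          · have : f j = y (π.symm j) := by rw [hf]; simp [h1, h2]
            rw [this]
            exact le_add_of_nonneg_right (Real.rpow_nonneg (norm_nonneg _) _)
          · have : f j = 0 := by rw [hf]; simp [h1, h2]
            rw [this, norm_zero, Real.zero_rpow ht0]
            exact add_nonneg (Real.rpow_nonneg (norm_nonneg _) _)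
              (Real.rpow_nonneg (norm_nonneg _) _)
        · have : f j = y j := by rw [hf]; simp [h1]
          rw [this]
          exact le_add_of_nonneg_left (Real.rpow_nonneg (norm_nonneg _) _)
      refine ⟨⟨f, hmem⟩, ?_⟩
      apply lp.ext
      funext i
      rw [show ((B ⟨f, hmem⟩ : H) i = _) from B_apply hP hQ ⟨f, hmem⟩ i]
      by_cases h1 : 1 ≤ i
      · rw [if_pos h1]
        by_cases h2 : 1 ≤ π i
        · rw [if_pos h2]
          show f (π i) = y i
          rw [hf]
          simp only [if_pos h2, Equiv.symm_apply_apply, if_pos h1]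
        · rw [if_neg h2]
          exact (hy' i ((mem_Zfin hband i).2 ⟨h1, by omega⟩)).symm
      · rw [if_neg h1]
        show f i = y i
        rw [hf]
        simp [h1]
  -- surjectivity
  have hqsurj : Function.Surjective qmap := by
    intro c
    set f : ℤ → ℂ := fun j => if h : j ∈ Zfin w π then c ⟨j, h⟩ else 0 with hf
    have hmem : Memℓp f 2 := by
      apply memℓp_of_finsupport (Zfin w π)
      intro j hj
      simp [hf, hj]
    refine ⟨⟨f, hmem⟩, ?_⟩
    funext i
    rw [hq]
    show f (i : ℤ) = c i
    simp [hf, i.2]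
  -- closedness
  have hclosed : IsClosed (LinearMap.ker qmap : Set H) := by
    have hcont : Continuous qmap := by
      apply continuous_pi
      intro i
      exact eval_continuous (i : ℤ)
    have : (LinearMap.ker qmap : Set H) = qmap ⁻¹' {0} := by
      ext x
      simp only [SetLike.mem_coe, LinearMap.mem_ker, Set.mem_preimage, Set.mem_singleton_iff]
    rw [this]
    exact isClosed_singleton.preimage hcont
  refine ⟨(Submodule.quotEquivOfEq _ _ hrange).trans
    (qmap.quotKerEquivOfSurjective hqsurj), ?_⟩
  rw [hrange]
  exact hclosed

end Ran

section Base
variable {w : ℕ} {π : ℤ ≃ ℤ}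

theorem card_K (hband : ∀ i : ℤ, |π i - i| ≤ (w : ℤ)) :
    (Afin w π 1).card = (Kfin w π).card := by
  apply Finset.card_bij (fun a _ => π a)
  · intro a ha
    simp only [Afin, Finset.mem_filter, Finset.mem_Icc] at ha
    rw [mem_Kfin hband]
    refine ⟨ha.2, ?_⟩
    rw [Equiv.symm_apply_apply]
    omega
  · intro a₁ ha₁ a₂ ha₂ h
    exact π.injective h
  · intro b hb
    rw [mem_Kfin hband] at hb
    have hbd := abs_le.1 (bandsymm hband b)
    refine ⟨π.symm b, ?_, by rw [Equiv.apply_symm_apply]⟩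
    simp only [Afin, Finset.mem_filter, Finset.mem_Icc]
    rw [Equiv.apply_symm_apply]
    refine ⟨⟨by omega, by omega⟩, hb.1⟩

theorem card_Z : Zfin w π = Cfin w π 1 := by
  ext i
  simp only [Zfin, Cfin, Finset.mem_filter, Finset.mem_Icc]
  constructor
  · rintro ⟨⟨h1, h2⟩, h3⟩
    exact ⟨⟨h1, by omega⟩, by omega⟩
  · rintro ⟨⟨h1, h2⟩, h3⟩
    exact ⟨⟨h1, by omega⟩, by omega⟩

end Base


/-- **Theorem 1.** For a banded permutation `π` of `ℤ` with bandwidth `w`,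
the compression `B = Q P Q + (I − Q)` is Fredholm and its index equals `n − w`,
where `n` is the number of `i ∈ [j* − w, j* + w − 1]` with `π(i) ≥ j*`,
for every choice of `j*`. -/
theorem plus_index_eq_window_count (w : ℕ) (π : ℤ ≃ ℤ)
    (hband : ∀ i : ℤ, |π i - i| ≤ (w : ℤ))
    (P Q : H →L[ℂ] H)
    (hP : ∀ (x : H) (i : ℤ), P x i = x (π i))
    (hQ : ∀ (x : H) (i : ℤ), Q x i = if 1 ≤ i then x i else 0) :
    IsFredholm (Q ∘L P ∘L Q + (1 - Q)) ∧
    ∀ jstar : ℤ,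
      fredholmIndex (Q ∘L P ∘L Q + (1 - Q)) =
        (((Finset.Icc (jstar - w) (jstar + w - 1)).filter
            (fun i => jstar ≤ π i)).card : ℤ) - w := by
  obtain ⟨eker, -⟩ := ker_equiv_aux hband hP hQ
  obtain ⟨ecok, hclosed⟩ := range_equiv_aux hband hP hQ
  have hfk : FiniteDimensional ℂ (LinearMap.ker ((Q ∘L P ∘L Q + (1 - Q) : H →L[ℂ] H) : H →ₗ[ℂ] H)) :=
    Module.Finite.equiv eker.symm
  have hfc : FiniteDimensional ℂ (H ⧸ LinearMap.range ((Q ∘L P ∘L Q + (1 - Q) : H →L[ℂ] H) : H →ₗ[ℂ] H)) :=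
    Module.Finite.equiv ecok.symm
  refine ⟨⟨hfk, hclosed, hfc⟩, ?_⟩
  intro jstar
  have hdk : Module.finrank ℂ (LinearMap.ker ((Q ∘L P ∘L Q + (1 - Q) : H →L[ℂ] H) : H →ₗ[ℂ] H)) = (Kfin w π).card := by
    rw [eker.finrank_eq, Module.finrank_pi, Fintype.card_coe]
  have hdc : Module.finrank ℂ (H ⧸ LinearMap.range ((Q ∘L P ∘L Q + (1 - Q) : H →L[ℂ] H) : H →ₗ[ℂ] H))
      = (Zfin w π).card := by
    rw [ecok.finrank_eq, Module.finrank_pi, Fintype.card_coe]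
  rw [fredholmIndex, hdk, hdc]
  have h1 := nsplit hband jstar
  have h2 := constAC hband jstar
  have h3 := card_K hband
  have h4 : (Zfin w π).card = (Cfin w π 1).card := by rw [card_Z]
  omega
end
end

section
/- Let w ∈ ℕ, let π : ℤ → ℤ be a bijection with |π(i) − i| ≤ w for all i, let P be its permutation operator on ℓ²(ℤ), and set B := Q P Q + (I − Q). Then the kernel of B is the (finite-dimensional) span of the basis vectors e_j with j ≥ 1 and π⁻¹(j) ≤ 0, so dim ker(B) = #{ j ≥ 1 : π⁻¹(j) ≤ 0 }; moreover the range of B is closed and its codimension in ℓ²(ℤ) equals #{ i ≥ 1 : π(i) ≤ 0 }. -/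
noncomputable section

/-- The standard basis vector `e_j` of `ℓ²(ℤ)`. -/
def stdBasis (j : ℤ) : H := lp.single 2 j 1

lemma stdBasis_apply (j i : ℤ) : (stdBasis j : ∀ _ : ℤ, ℂ) i = if i = j then 1 else 0 := by
  rcases eq_or_ne i j with h | h
  · subst h; simp [stdBasis, lp.single_apply_self]
  · simp [stdBasis, lp.single_apply_ne _ _ _ h, h]

lemma stdBasis_injective : Function.Injective stdBasis := by
  intro a b hab
  have h := congrFun (congrArg (fun f : H => (f : ∀ _ : ℤ, ℂ)) hab) a
  dsimp only at h
  rw [stdBasis_apply, stdBasis_apply, if_pos rfl] at h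
  by_contra hne
  rw [if_neg hne] at h
  exact one_ne_zero h

/-- Coordinate evaluation as a continuous linear map. -/
def evalCLM (i : ℤ) : H →L[ℂ] ℂ :=
  LinearMap.mkContinuous
    { toFun := fun f => f i
      map_add' := fun f g => congrFun (lp.coeFn_add f g) i
      map_smul' := fun c f => congrFun (lp.coeFn_smul c f) i }
    1 (fun f => by
      simpa using lp.norm_apply_le_norm (E := fun _ : ℤ => ℂ) (p := 2) (by norm_num) f i)

@[simp] lemma evalCLM_apply (i : ℤ) (f : H) : evalCLM i f = f i := rfl

lemma sum_smul_stdBasis_apply (s : Finset ℤ) (c : ℤ → ℂ) (i : ℤ) :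
    ((∑ j ∈ s, c j • stdBasis j : H) : ∀ _ : ℤ, ℂ) i = if i ∈ s then c i else 0 := by
  rw [lp.coeFn_sum, Finset.sum_apply]
  have : ∀ j ∈ s, ((c j • stdBasis j : H) : ∀ _ : ℤ, ℂ) i = if i = j then c j else 0 := by
    intro j _
    rw [lp.coeFn_smul, Pi.smul_apply, stdBasis_apply, smul_eq_mul]
    split_ifs <;> simp
  rw [Finset.sum_congr rfl this, Finset.sum_ite_eq]

lemma stdBasis_linearIndependent : LinearIndependent ℂ stdBasis := by
  rw [linearIndependent_iff']
  intro s g hsum i hi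
  have := congrFun (congrArg (fun f : H => (f : ∀ _ : ℤ, ℂ)) hsum) i
  dsimp only at this
  rw [sum_smul_stdBasis_apply, if_pos hi] at this
  simpa using this

/-- For a banded permutation `π` with permutation operator `P` and
`B = Q P Q + (I − Q)`: the kernel of `B` is the span of the basis vectors `e_j` with
`j ≥ 1` and `π⁻¹(j) ≤ 0`, so `dim ker B = #{ j ≥ 1 : π⁻¹(j) ≤ 0 }`; the range of `B`
is closed and its codimension equals `#{ i ≥ 1 : π(i) ≤ 0 }`. -/
theorem kernel_and_range_of_compression (w : ℕ) (π : ℤ ≃ ℤ)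
    (hband : ∀ i : ℤ, |π i - i| ≤ (w : ℤ))
    (P Q : H →L[ℂ] H)
    (hP : ∀ (x : H) (i : ℤ), P x i = x (π i))
    (hQ : ∀ (x : H) (i : ℤ), Q x i = if 1 ≤ i then x i else 0) :
    LinearMap.ker ((Q ∘L P ∘L Q + (1 - Q) : H →L[ℂ] H) : H →ₗ[ℂ] H) =
      Submodule.span ℂ (stdBasis '' {j : ℤ | 1 ≤ j ∧ π.symm j ≤ 0}) ∧
    Module.finrank ℂ (LinearMap.ker ((Q ∘L P ∘L Q + (1 - Q) : H →L[ℂ] H) : H →ₗ[ℂ] H)) =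
      {j : ℤ | 1 ≤ j ∧ π.symm j ≤ 0}.ncard ∧
    IsClosed (LinearMap.range ((Q ∘L P ∘L Q + (1 - Q) : H →L[ℂ] H) : H →ₗ[ℂ] H) : Set H) ∧
    Module.finrank ℂ (H ⧸ LinearMap.range ((Q ∘L P ∘L Q + (1 - Q) : H →L[ℂ] H) : H →ₗ[ℂ] H)) =
      {i : ℤ | 1 ≤ i ∧ π i ≤ 0}.ncard := by
  classical
  set B : H →L[ℂ] H := Q ∘L P ∘L Q + (1 - Q) with hBdef
  set K : Set ℤ := {j : ℤ | 1 ≤ j ∧ π.symm j ≤ 0} with hKdef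
  set S : Set ℤ := {i : ℤ | 1 ≤ i ∧ π i ≤ 0} with hSdef
  -- coordinate formula for B
  have hBx : ∀ (x : H) (i : ℤ),
      (B x : ∀ _ : ℤ, ℂ) i = if 1 ≤ i then (if 1 ≤ π i then x (π i) else 0) else x i := by
    intro x i
    have h1 : B x = Q (P (Q x)) + (x - Q x) := by
      simp [hBdef, ContinuousLinearMap.add_apply, ContinuousLinearMap.sub_apply]
    rw [h1, lp.coeFn_add, Pi.add_apply, lp.coeFn_sub, Pi.sub_apply, hQ, hQ]
    by_cases hi : 1 ≤ i
    · rw [if_pos hi, if_pos hi, if_pos hi, hP, hQ, sub_self, add_zero]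
    · rw [if_neg hi, if_neg hi, if_neg hi, zero_add, sub_zero]
  -- finiteness of K and S
  have hKfin : K.Finite := by
    apply (Set.finite_Icc 1 (w : ℤ)).subset
    rintro j ⟨h1, h2⟩
    have hb := hband (π.symm j)
    rw [Equiv.apply_symm_apply] at hb
    have := abs_le.1 hb
    constructor
    · exact h1
    · linarith [this.1]
  have hSfin : S.Finite := by
    apply (Set.finite_Icc 1 (w : ℤ)).subset
    rintro i ⟨h1, h2⟩
    have := abs_le.1 (hband i)
    exact ⟨h1, by linarith [this.2]⟩
  -- kernel characterization
  have hker_iff : ∀ x : H, x ∈ LinearMap.ker (B : H →ₗ[ℂ] H) ↔ ∀ j : ℤ, j ∉ K → x j = 0 := by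
    intro x
    rw [LinearMap.mem_ker, ContinuousLinearMap.coe_coe]
    constructor
    · intro hx j hj
      have hx' : ∀ i : ℤ, (B x : ∀ _ : ℤ, ℂ) i = 0 := by
        intro i
        rw [hx]; exact congrFun (lp.coeFn_zero (E := fun _ : ℤ => ℂ) 2) i
      by_cases h1 : 1 ≤ j
      · have h2 : 1 ≤ π.symm j := by
          by_contra h2
          exact hj ⟨h1, by omega⟩
        have := hx' (π.symm j)
        rw [hBx, if_pos h2, Equiv.apply_symm_apply, if_pos h1] at this
        exact this
      · have := hx' j
        rw [hBx, if_neg h1] at this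
        exact this
    · intro hx
      apply lp.ext
      funext i
      rw [hBx]
      have h0 : ((0 : H) : ∀ _ : ℤ, ℂ) i = 0 := congrFun (lp.coeFn_zero (E := fun _ : ℤ => ℂ) 2) i
      rw [h0]
      by_cases h1 : 1 ≤ i
      · rw [if_pos h1]
        by_cases h2 : 1 ≤ π i
        · rw [if_pos h2]
          apply hx
          rintro ⟨_, hc⟩
          rw [Equiv.symm_apply_apply] at hc
          omega
        · rw [if_neg h2]
      · rw [if_neg h1]
        apply hx
        rintro ⟨hc, _⟩
        omega
  -- membership in span for supported elements
  have hspan_mem : ∀ x : H, (∀ j : ℤ, j ∉ K → x j = 0) →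
      x ∈ Submodule.span ℂ (stdBasis '' K) := by
    intro x hx
    have hxeq : x = ∑ j ∈ hKfin.toFinset, x j • stdBasis j := by
      apply lp.ext
      funext i
      rw [sum_smul_stdBasis_apply]
      by_cases hi : i ∈ hKfin.toFinset
      · rw [if_pos hi]
      · rw [if_neg hi]
        exact hx i (by simpa using hi)
    rw [hxeq]
    exact Submodule.sum_mem _ fun j hj => Submodule.smul_mem _ _
      (Submodule.subset_span ⟨j, by simpa using hj, rfl⟩)
  -- kernel = span
  have hker : LinearMap.ker (B : H →ₗ[ℂ] H) = Submodule.span ℂ (stdBasis '' K) := by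
    apply le_antisymm
    · intro x hx
      exact hspan_mem x ((hker_iff x).1 hx)
    · rw [Submodule.span_le]
      rintro _ ⟨j, hj, rfl⟩
      show stdBasis j ∈ (LinearMap.ker (B : H →ₗ[ℂ] H) : Set H)
      rw [SetLike.mem_coe, hker_iff]
      intro j' hj'
      rw [stdBasis_apply]
      rcases eq_or_ne j' j with h | h
      · exact absurd (h ▸ hj) hj'
      · rw [if_neg h]
  -- kernel finrank
  haveI : Fintype (stdBasis '' K) := (hKfin.image stdBasis).fintype
  have hli : LinearIndependent ℂ ((↑) : (stdBasis '' K) → H) := by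
    have := (stdBasis_linearIndependent.linearIndepOn K).id_image
    exact this
  have hkerrank : Module.finrank ℂ (LinearMap.ker (B : H →ₗ[ℂ] H)) = K.ncard := by
    rw [hker, finrank_span_set_eq_card hli, ← Set.ncard_eq_toFinset_card',
      Set.ncard_image_of_injective K stdBasis_injective]
  -- range characterization
  have hran_iff : ∀ y : H, y ∈ LinearMap.range (B : H →ₗ[ℂ] H) ↔ ∀ i ∈ S, y i = 0 := by
    intro y
    constructor
    · rintro ⟨x, rfl⟩ i ⟨h1, h2⟩
      show (B x : ∀ _ : ℤ, ℂ) i = 0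
      rw [hBx, if_pos h1, if_neg (by omega)]
    · intro hy
      -- construct a preimage
      set f : ℤ → ℤ := fun j => if 1 ≤ j then π.symm j else j with hfdef
      set A : Set ℤ := {j : ℤ | 1 ≤ j → 1 ≤ π.symm j} with hAdef
      set xfun : ℤ → ℂ := fun j => if j ∈ A then y (f j) else 0 with hxfdef
      have hginj : Function.Injective (fun j : A => f (j : ℤ)) := by
        rintro ⟨a, ha⟩ ⟨b, hb⟩ hab
        simp only [hfdef] at hab
        apply Subtype.ext
        by_cases h1 : 1 ≤ a <;> by_cases h2 : 1 ≤ b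
        · rw [if_pos h1, if_pos h2] at hab
          exact π.symm.injective hab
        · rw [if_pos h1, if_neg h2] at hab
          have := ha h1; omega
        · rw [if_neg h1, if_pos h2] at hab
          have := hb h2; omega
        · rwa [if_neg h1, if_neg h2] at hab
      have hy2 : Summable (fun i : ℤ => ‖y i‖ ^ (2 : ENNReal).toReal) :=
        (memℓp_gen_iff (by norm_num)).1 (lp.memℓp y)
      have hsub : Summable ((fun j : ℤ => ‖y (f j)‖ ^ (2 : ENNReal).toReal) ∘ ((↑) : A → ℤ)) :=
        hy2.comp_injective hginj
      have hind : Summable (A.indicator fun j : ℤ => ‖y (f j)‖ ^ (2 : ENNReal).toReal) :=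
        summable_subtype_iff_indicator.1 hsub
      have hmem : Memℓp xfun 2 := by
        apply memℓp_gen
        refine hind.congr fun j => ?_
        by_cases hj : j ∈ A
        · rw [Set.indicator_of_mem hj, hxfdef]
          simp only [if_pos hj]
        · rw [Set.indicator_of_notMem hj, hxfdef]
          simp only [if_neg hj, norm_zero]
          rw [Real.zero_rpow (by norm_num)]
      refine ⟨⟨xfun, hmem⟩, ?_⟩
      show B ⟨xfun, hmem⟩ = y
      apply lp.ext
      funext i
      rw [hBx]
      have hcoe : ∀ j : ℤ, ((⟨xfun, hmem⟩ : H) : ∀ _ : ℤ, ℂ) j = xfun j := fun _ => rfl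
      by_cases h1 : 1 ≤ i
      · rw [if_pos h1]
        by_cases h2 : 1 ≤ π i
        · rw [if_pos h2, hcoe, hxfdef]
          have hmemA : π i ∈ A := by
            intro _
            rw [Equiv.symm_apply_apply]
            exact h1
          simp only [if_pos hmemA, hfdef]
          rw [if_pos h2, Equiv.symm_apply_apply]
        · rw [if_neg h2]
          exact (hy i ⟨h1, by omega⟩).symm
      · rw [if_neg h1, hcoe, hxfdef]
        have hmemA : i ∈ A := fun h => absurd h h1
        simp only [if_pos hmemA, hfdef]
        rw [if_neg h1]
  -- range is closed
  have hclosed : IsClosed (LinearMap.range (B : H →ₗ[ℂ] H) : Set H) := by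
    have : (LinearMap.range (B : H →ₗ[ℂ] H) : Set H) = ⋂ i ∈ S, (evalCLM i) ⁻¹' {0} := by
      ext y
      simp only [SetLike.mem_coe, hran_iff, Set.mem_iInter, Set.mem_preimage,
        Set.mem_singleton_iff, evalCLM_apply]
    rw [this]
    exact isClosed_biInter fun i _ =>
      (isClosed_singleton).preimage (evalCLM i).continuous
  -- codimension of range
  set T : Finset ℤ := hSfin.toFinset with hTdef
  set φ : H →ₗ[ℂ] ({i // i ∈ T} → ℂ) :=
    LinearMap.pi (fun i : {i // i ∈ T} => ((evalCLM (i : ℤ)).toLinearMap)) with hφdef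
  have hφker : LinearMap.ker φ = LinearMap.range (B : H →ₗ[ℂ] H) := by
    ext y
    rw [LinearMap.mem_ker, hran_iff]
    constructor
    · intro h i hi
      have := congrFun h ⟨i, hSfin.mem_toFinset.mpr hi⟩
      simpa [hφdef] using this
    · intro h
      funext i
      have hi : (i : ℤ) ∈ S := hSfin.mem_toFinset.mp i.2
      simpa [hφdef] using h i hi
  have hφsurj : Function.Surjective φ := by
    intro c
    set c' : ℤ → ℂ := fun i => if h : i ∈ T then c ⟨i, h⟩ else 0 with hc'def
    refine ⟨∑ j ∈ T, c' j • stdBasis j, ?_⟩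
    funext i
    have : φ (∑ j ∈ T, c' j • stdBasis j) i
        = ((∑ j ∈ T, c' j • stdBasis j : H) : ∀ _ : ℤ, ℂ) (i : ℤ) := rfl
    rw [this, sum_smul_stdBasis_apply, if_pos i.2, hc'def]
    simp only [dif_pos i.2]
  have hquot : Module.finrank ℂ (H ⧸ LinearMap.range (B : H →ₗ[ℂ] H)) = S.ncard := by
    have e1 : (H ⧸ LinearMap.range (B : H →ₗ[ℂ] H)) ≃ₗ[ℂ] (H ⧸ LinearMap.ker φ) :=
      Submodule.quotEquivOfEq _ _ hφker.symm
    have e2 : (H ⧸ LinearMap.ker φ) ≃ₗ[ℂ] ({i // i ∈ T} → ℂ) :=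
      φ.quotKerEquivOfSurjective hφsurj
    rw [e1.finrank_eq, e2.finrank_eq, Module.finrank_pi, Fintype.card_coe,
      Set.ncard_eq_toFinset_card S hSfin]
  exact ⟨hker, hkerrank, hclosed, hquot⟩
end
end

section
/- Let w ∈ ℕ, let π : ℤ → ℤ be a bijection with |π(i) − i| ≤ w for all i, and let P be its permutation operator on ℓ²(ℤ). Then for every k ∈ ℤ the operator B_k := Q_k P Q_k + (I − Q_k) is Fredholm, and its index is independent of k: ind(B_k) = ind(B_1) for all k ∈ ℤ. -/
noncomputable section

open scoped ENNReal

/-- Coordinate evaluation as a continuous linear map. -/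
def ev (i : ℤ) : H →L[ℂ] ℂ :=
  LinearMap.mkContinuous
    { toFun := fun x => x i
      map_add' := by intro x y; simp [lp.coeFn_add]
      map_smul' := by intro c x; simp [lp.coeFn_smul] } 1
    (fun x => by show ‖x i‖ ≤ 1 * ‖x‖; simpa using lp.norm_apply_le_norm two_ne_zero x i)



@[simp] lemma ev_apply (i : ℤ) (x : H) : ev i x = x i := rfl

section
variable {w : ℕ} {π : ℤ ≃ ℤ}

def Aset (w : ℕ) (π : ℤ ≃ ℤ) (k : ℤ) : Finset ℤ :=
  (Finset.Ico k (k + w + 1)).filter (fun j => π.symm j < k)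
def Bset (w : ℕ) (π : ℤ ≃ ℤ) (k : ℤ) : Finset ℤ :=
  (Finset.Ico k (k + w + 1)).filter (fun i => π i < k)
def A'set (w : ℕ) (π : ℤ ≃ ℤ) (k : ℤ) : Finset ℤ :=
  (Finset.Ico (k - w - 1) k).filter (fun i => k ≤ π i)

lemma mem_Aset (hband : ∀ i : ℤ, |π i - i| ≤ (w : ℤ)) {k j : ℤ} :
    j ∈ Aset w π k ↔ k ≤ j ∧ π.symm j < k := by
  simp only [Aset, Finset.mem_filter, Finset.mem_Ico]
  constructor
  · rintro ⟨⟨h1, _⟩, h3⟩; exact ⟨h1, h3⟩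
  · rintro ⟨h1, h3⟩
    refine ⟨⟨h1, ?_⟩, h3⟩
    have := hband (π.symm j)
    rw [Equiv.apply_symm_apply] at this
    have := abs_le.1 this
    omega

lemma mem_Bset (hband : ∀ i : ℤ, |π i - i| ≤ (w : ℤ)) {k i : ℤ} :
    i ∈ Bset w π k ↔ k ≤ i ∧ π i < k := by
  simp only [Bset, Finset.mem_filter, Finset.mem_Ico]
  constructor
  · rintro ⟨⟨h1, _⟩, h3⟩; exact ⟨h1, h3⟩
  · rintro ⟨h1, h3⟩
    refine ⟨⟨h1, ?_⟩, h3⟩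
    have := abs_le.1 (hband i)
    omega

lemma mem_A'set (hband : ∀ i : ℤ, |π i - i| ≤ (w : ℤ)) {k i : ℤ} :
    i ∈ A'set w π k ↔ i < k ∧ k ≤ π i := by
  simp only [A'set, Finset.mem_filter, Finset.mem_Ico]
  constructor
  · rintro ⟨⟨_, h2⟩, h3⟩; exact ⟨h2, h3⟩
  · rintro ⟨h2, h3⟩
    refine ⟨⟨?_, h2⟩, h3⟩
    have := abs_le.1 (hband i)
    omega

lemma card_Aset (hband : ∀ i : ℤ, |π i - i| ≤ (w : ℤ)) (k : ℤ) :
    (Aset w π k).card = (A'set w π k).card := by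
  apply Finset.card_bij (fun j _ => π.symm j)
  · intro j hj
    obtain ⟨h1, h2⟩ := (mem_Aset hband).1 hj
    exact (mem_A'set hband).2 ⟨h2, by rwa [Equiv.apply_symm_apply]⟩
  · intro a _ b _ hab
    exact π.symm.injective hab
  · intro i hi
    obtain ⟨h1, h2⟩ := (mem_A'set hband).1 hi
    exact ⟨π i, (mem_Aset hband).2 ⟨h2, by simpa using h1⟩, by simp⟩

lemma sum_repr (hband : ∀ i : ℤ, |π i - i| ≤ (w : ℤ)) {k m M : ℤ}
    (hm : m ≤ k - w - 1) (hM : k + w ≤ M) :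
    ∑ i ∈ Finset.Ico m M, ((if k ≤ π i then (1 : ℤ) else 0) - (if k ≤ i then 1 else 0))
      = ((A'set w π k).card : ℤ) - ((Bset w π k).card : ℤ) := by
  have hpt : ∀ i : ℤ, ((if k ≤ π i then (1 : ℤ) else 0) - (if k ≤ i then 1 else 0))
      = (if i ∈ A'set w π k then (1 : ℤ) else 0) - (if i ∈ Bset w π k then 1 else 0) := by
    intro i
    rw [show (if i ∈ A'set w π k then (1:ℤ) else 0) = (if i < k ∧ k ≤ π i then 1 else 0) from by
        simp [mem_A'set hband],
      show (if i ∈ Bset w π k then (1:ℤ) else 0) = (if k ≤ i ∧ π i < k then 1 else 0) from by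
        simp [mem_Bset hband]]
    split_ifs <;> omega
  calc ∑ i ∈ Finset.Ico m M, ((if k ≤ π i then (1 : ℤ) else 0) - (if k ≤ i then 1 else 0))
      = ∑ i ∈ Finset.Ico m M, ((if i ∈ A'set w π k then (1 : ℤ) else 0)
          - (if i ∈ Bset w π k then 1 else 0)) := by
        exact Finset.sum_congr rfl (fun i _ => hpt i)
    _ = ((A'set w π k).card : ℤ) - ((Bset w π k).card : ℤ) := by
        rw [Finset.sum_sub_distrib, Finset.sum_boole, Finset.sum_boole]
        congr 1
        · congr 1
          rw [Finset.filter_mem_eq_inter, Finset.inter_eq_right.2]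
          intro i hi
          obtain ⟨h1, h2⟩ := (mem_A'set hband).1 hi
          have := abs_le.1 (hband i)
          simp only [Finset.mem_Ico]
          omega
        · congr 1
          rw [Finset.filter_mem_eq_inter, Finset.inter_eq_right.2]
          intro i hi
          obtain ⟨h1, h2⟩ := (mem_Bset hband).1 hi
          have := abs_le.1 (hband i)
          simp only [Finset.mem_Ico]
          omega

lemma diff_const (hband : ∀ i : ℤ, |π i - i| ≤ (w : ℤ)) {k l : ℤ} (hkl : k ≤ l) :
    ((A'set w π k).card : ℤ) - ((Bset w π k).card : ℤ)
      = ((A'set w π l).card : ℤ) - ((Bset w π l).card : ℤ) := by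
  set m : ℤ := k - w - 1 with hm
  set M : ℤ := l + w + 1 with hM
  rw [← sum_repr hband (k := k) (m := m) (M := M) (by omega) (by omega),
      ← sum_repr hband (k := l) (m := m) (M := M) (by omega) (by omega)]
  rw [← sub_eq_zero, ← Finset.sum_sub_distrib]
  have hpt : ∀ i : ℤ,
      (((if k ≤ π i then (1 : ℤ) else 0) - (if k ≤ i then 1 else 0))
        - ((if l ≤ π i then (1 : ℤ) else 0) - (if l ≤ i then 1 else 0)))
      = (if k ≤ π i ∧ π i < l then (1 : ℤ) else 0) - (if k ≤ i ∧ i < l then 1 else 0) := by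
    intro i
    split_ifs <;> omega
  rw [Finset.sum_congr rfl (fun i _ => hpt i), Finset.sum_sub_distrib,
    Finset.sum_boole, Finset.sum_boole, sub_eq_zero]
  congr 1
  apply Finset.card_bij (fun i _ => π i)
  · intro i hi
    obtain ⟨hbI, h1, h2⟩ := Finset.mem_filter.1 hi
    exact Finset.mem_filter.2 ⟨Finset.mem_Ico.2 ⟨by omega, by omega⟩, h1, h2⟩
  · intro a _ b _ hab
    exact π.injective hab
  · intro b hb
    obtain ⟨hbI, h1, h2⟩ := Finset.mem_filter.1 hb
    refine ⟨π.symm b, Finset.mem_filter.2 ⟨Finset.mem_Ico.2 ?_, ?_⟩, by simp⟩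
    · have := abs_le.1 (hband (π.symm b))
      rw [Equiv.apply_symm_apply] at this
      omega
    · simp only [Equiv.apply_symm_apply]
      exact ⟨h1, h2⟩

variable {B : H →L[ℂ] H} {k : ℤ}

lemma ker_iff (hband : ∀ i : ℤ, |π i - i| ≤ (w : ℤ))
    (hBa : ∀ (x : H) (i : ℤ), B x i = if k ≤ i then (if k ≤ π i then x (π i) else 0) else x i)
    (x : H) : x ∈ LinearMap.ker (B : H →ₗ[ℂ] H) ↔ ∀ j, j ∉ Aset w π k → x j = 0 := by
  rw [LinearMap.mem_ker]
  constructor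
  · intro h j hj
    have hco : ∀ i : ℤ, B x i = 0 := by
      intro i
      rw [show B x = (0 : H) from h]
      exact congrFun (lp.coeFn_zero _ _) i
    by_cases hk : k ≤ j
    · have hsy : k ≤ π.symm j := by
        by_contra hc
        exact hj ((mem_Aset hband).2 ⟨hk, not_le.1 hc⟩)
      have := hco (π.symm j)
      rw [hBa] at this
      rw [if_pos hsy, Equiv.apply_symm_apply, if_pos hk] at this
      exact this
    · have := hco j
      rwa [hBa, if_neg hk] at this
  · intro h
    apply lp.ext
    funext i
    rw [ContinuousLinearMap.coe_coe, hBa]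
    simp only [lp.coeFn_zero, Pi.zero_apply]
    by_cases hk : k ≤ i
    · rw [if_pos hk]
      by_cases hpk : k ≤ π i
      · rw [if_pos hpk]
        apply h
        intro hc
        have := ((mem_Aset hband).1 hc).2
        rw [Equiv.symm_apply_apply] at this
        omega
      · rw [if_neg hpk]
    · rw [if_neg hk]
      apply h
      intro hc
      exact hk ((mem_Aset hband).1 hc).1

def kerEquiv (hband : ∀ i : ℤ, |π i - i| ≤ (w : ℤ))
    (hBa : ∀ (x : H) (i : ℤ), B x i = if k ≤ i then (if k ≤ π i then x (π i) else 0) else x i) :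
    LinearMap.ker (B : H →ₗ[ℂ] H) ≃ₗ[ℂ] (Aset w π k → ℂ) := by
  refine LinearEquiv.ofBijective
    { toFun := fun x a => x.1 a.1
      map_add' := by intro x y; funext a; simp [lp.coeFn_add]
      map_smul' := by intro c x; funext a; simp [lp.coeFn_smul] } ⟨?_, ?_⟩
  · intro x y hxy
    have hco : ∀ a : Aset w π k, x.1 a.1 = y.1 a.1 := fun a => congrFun hxy a
    apply Subtype.ext
    apply lp.ext
    funext j
    by_cases hj : j ∈ Aset w π k
    · exact hco ⟨j, hj⟩
    · rw [(ker_iff hband hBa x.1).1 x.2 j hj, (ker_iff hband hBa y.1).1 y.2 j hj]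
  · intro f
    have hmem : (∑ a ∈ (Aset w π k).attach, lp.single 2 (a : ℤ) (f a)) ∈ LinearMap.ker (B : H →ₗ[ℂ] H) := by
      rw [ker_iff hband hBa]
      intro j hj
      rw [lp.coeFn_sum, Finset.sum_apply]
      apply Finset.sum_eq_zero
      intro a _
      exact lp.single_apply_ne 2 _ _ (fun hc => hj (hc ▸ a.2))
    refine ⟨⟨_, hmem⟩, ?_⟩
    funext a
    show (↑(∑ b ∈ (Aset w π k).attach, lp.single 2 (b : ℤ) (f b)) : ∀ _ : ℤ, ℂ) a.1 = f a
    rw [lp.coeFn_sum, Finset.sum_apply]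
    rw [Finset.sum_eq_single a]
    · exact lp.single_apply_self 2 _ _
    · intro b _ hb
      exact lp.single_apply_ne 2 _ _ (fun hc => hb (Subtype.ext hc.symm))
    · intro hc
      exact absurd (Finset.mem_attach _ a) hc


lemma memℓp_solution (y : H) (k : ℤ) (π : ℤ ≃ ℤ) :
    Memℓp (fun j : ℤ => if k ≤ j then (if k ≤ π.symm j then y (π.symm j) else 0) else y j) 2 := by
  apply memℓp_gen
  have hy : Summable fun i : ℤ => ‖y i‖ ^ (2 : ℝ≥0∞).toReal :=
    (lp.memℓp y).summable (by norm_num)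
  have hy' : Summable fun j : ℤ => ‖y (π.symm j)‖ ^ (2 : ℝ≥0∞).toReal :=
    (π.symm.summable_iff (f := fun i : ℤ => ‖y i‖ ^ (2 : ℝ≥0∞).toReal)).2 hy
  refine Summable.of_nonneg_of_le (fun j => ?_) (fun j => ?_) (hy'.add hy)
  · positivity
  · have h2 : (2 : ℝ≥0∞).toReal = 2 := by norm_num
    rw [h2]
    by_cases h1 : k ≤ j
    · rw [if_pos h1]
      by_cases h2' : k ≤ π.symm j
      · rw [if_pos h2']
        exact le_add_of_nonneg_right (by positivity)
      · rw [if_neg h2']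
        have hnn : (0:ℝ) ≤ ‖y (π.symm j)‖ ^ 2 + ‖y j‖ ^ 2 := by positivity
        simpa using hnn
    · rw [if_neg h1]
      exact le_add_of_nonneg_left (by positivity)

lemma range_iff (hband : ∀ i : ℤ, |π i - i| ≤ (w : ℤ))
    (hBa : ∀ (x : H) (i : ℤ), B x i = if k ≤ i then (if k ≤ π i then x (π i) else 0) else x i)
    (y : H) : y ∈ LinearMap.range (B : H →ₗ[ℂ] H) ↔ ∀ i ∈ Bset w π k, y i = 0 := by
  constructor
  · rintro ⟨x, rfl⟩ i hi
    obtain ⟨h1, h2⟩ := (mem_Bset hband).1 hi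
    rw [ContinuousLinearMap.coe_coe, hBa, if_pos h1, if_neg (not_le.2 h2)]
  · intro hy
    refine ⟨⟨fun j : ℤ => if k ≤ j then (if k ≤ π.symm j then y (π.symm j) else 0) else y j,
      memℓp_solution y k π⟩, ?_⟩
    apply lp.ext
    funext i
    rw [ContinuousLinearMap.coe_coe, hBa]
    by_cases h1 : k ≤ i
    · rw [if_pos h1]
      by_cases h2 : k ≤ π i
      · rw [if_pos h2]
        show (if k ≤ π i then (if k ≤ π.symm (π i) then y (π.symm (π i)) else 0) else y (π i)) = y i
        rw [if_pos h2, Equiv.symm_apply_apply, if_pos h1]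
      · rw [if_neg h2]
        exact (hy i ((mem_Bset hband).2 ⟨h1, not_le.1 h2⟩)).symm
    · rw [if_neg h1]
      show (if k ≤ i then (if k ≤ π.symm i then y (π.symm i) else 0) else y i) = y i
      rw [if_neg h1]

end

section
variable {w : ℕ} {π : ℤ ≃ ℤ} {B : H →L[ℂ] H} {k : ℤ}

lemma range_closed (hband : ∀ i : ℤ, |π i - i| ≤ (w : ℤ))
    (hBa : ∀ (x : H) (i : ℤ), B x i = if k ≤ i then (if k ≤ π i then x (π i) else 0) else x i) :
    IsClosed (LinearMap.range (B : H →ₗ[ℂ] H) : Set H) := by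
  have hset : (LinearMap.range (B : H →ₗ[ℂ] H) : Set H) = ⋂ i ∈ Bset w π k, (ev i) ⁻¹' {0} := by
    ext y
    simp only [SetLike.mem_coe, range_iff hband hBa, Set.mem_iInter, Set.mem_preimage,
      Set.mem_singleton_iff, ev_apply]
  rw [hset]
  exact isClosed_biInter (fun i _ => isClosed_singleton.preimage (ev i).continuous)

/-- Restriction of coordinates to a finite set, as a linear map. -/
def coordRestrict (s : Finset ℤ) : H →ₗ[ℂ] (s → ℂ) where
  toFun := fun y a => y a.1
  map_add' := by intro x y; funext a; simp [lp.coeFn_add]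
  map_smul' := by intro c x; funext a; simp [lp.coeFn_smul]

lemma coordRestrict_surjective (s : Finset ℤ) : Function.Surjective (coordRestrict s) := by
  intro f
  refine ⟨∑ a ∈ s.attach, lp.single 2 (a : ℤ) (f a), ?_⟩
  funext a
  show (↑(∑ b ∈ s.attach, lp.single 2 (b : ℤ) (f b)) : ∀ _ : ℤ, ℂ) a.1 = f a
  rw [lp.coeFn_sum, Finset.sum_apply]
  rw [Finset.sum_eq_single a]
  · exact lp.single_apply_self 2 _ _
  · intro b _ hb
    exact lp.single_apply_ne 2 _ _ (fun hc => hb (Subtype.ext hc.symm))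
  · intro hc
    exact absurd (Finset.mem_attach _ a) hc

lemma range_eq_ker (hband : ∀ i : ℤ, |π i - i| ≤ (w : ℤ))
    (hBa : ∀ (x : H) (i : ℤ), B x i = if k ≤ i then (if k ≤ π i then x (π i) else 0) else x i) :
    LinearMap.range (B : H →ₗ[ℂ] H) = LinearMap.ker (coordRestrict (Bset w π k)) := by
  ext y
  rw [LinearMap.mem_ker, range_iff hband hBa]
  constructor
  · intro h
    funext a
    exact h a.1 a.2
  · intro h i hi
    exact congrFun h ⟨i, hi⟩

def cokerEquiv (hband : ∀ i : ℤ, |π i - i| ≤ (w : ℤ))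
    (hBa : ∀ (x : H) (i : ℤ), B x i = if k ≤ i then (if k ≤ π i then x (π i) else 0) else x i) :
    (H ⧸ LinearMap.range (B : H →ₗ[ℂ] H)) ≃ₗ[ℂ] (Bset w π k → ℂ) :=
  (Submodule.quotEquivOfEq _ _ (range_eq_ker hband hBa)).trans
    ((coordRestrict (Bset w π k)).quotKerEquivOfSurjective (coordRestrict_surjective _))

end

/-- **Lemma 1.** For a banded permutation operator `P` on `ℓ²(ℤ)`, each
compression `B_k = Q_k P Q_k + (I − Q_k)` is Fredholm, with index independent of `k`. -/
theorem index_independent_of_cut (w : ℕ) (π : ℤ ≃ ℤ)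
    (hband : ∀ i : ℤ, |π i - i| ≤ (w : ℤ))
    (P : H →L[ℂ] H) (Q : ℤ → (H →L[ℂ] H))
    (hP : ∀ (x : H) (i : ℤ), P x i = x (π i))
    (hQ : ∀ (k : ℤ) (x : H) (i : ℤ), Q k x i = if k ≤ i then x i else 0) :
    ∀ k : ℤ,
      IsFredholm (Q k ∘L P ∘L Q k + (1 - Q k)) ∧
      fredholmIndex (Q k ∘L P ∘L Q k + (1 - Q k)) =
        fredholmIndex (Q 1 ∘L P ∘L Q 1 + (1 - Q 1)) := by
  have hBa : ∀ (k : ℤ) (x : H) (i : ℤ), (Q k ∘L P ∘L Q k + (1 - Q k)) x i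
      = if k ≤ i then (if k ≤ π i then x (π i) else 0) else x i := by
    intro k x i
    have hexp : (Q k ∘L P ∘L Q k + (1 - Q k)) x i
        = Q k (P (Q k x)) i + (x i - Q k x i) := by
      simp [ContinuousLinearMap.add_apply, ContinuousLinearMap.sub_apply,
        ContinuousLinearMap.comp_apply, ContinuousLinearMap.one_apply,
        lp.coeFn_add, lp.coeFn_sub]
    rw [hexp, hQ, hP, hQ, hQ]
    by_cases h1 : k ≤ i
    · rw [if_pos h1, if_pos h1, if_pos h1]; ring
    · rw [if_neg h1, if_neg h1, if_neg h1]; ring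
  have key : ∀ k : ℤ, IsFredholm (Q k ∘L P ∘L Q k + (1 - Q k)) ∧
      fredholmIndex (Q k ∘L P ∘L Q k + (1 - Q k))
        = ((Aset w π k).card : ℤ) - ((Bset w π k).card : ℤ) := by
    intro k
    have hBa' := hBa k
    have kFD : FiniteDimensional ℂ (LinearMap.ker ((Q k ∘L P ∘L Q k + (1 - Q k) : H →L[ℂ] H) : H →ₗ[ℂ] H)) :=
      LinearEquiv.finiteDimensional (kerEquiv hband hBa').symm
    have cFD : FiniteDimensional ℂ (H ⧸ LinearMap.range ((Q k ∘L P ∘L Q k + (1 - Q k) : H →L[ℂ] H) : H →ₗ[ℂ] H)) :=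
      LinearEquiv.finiteDimensional (cokerEquiv hband hBa').symm
    refine ⟨⟨kFD, range_closed hband hBa', cFD⟩, ?_⟩
    unfold fredholmIndex
    rw [LinearEquiv.finrank_eq (kerEquiv hband hBa'),
      LinearEquiv.finrank_eq (cokerEquiv hband hBa'),
      Module.finrank_fintype_fun_eq_card, Module.finrank_fintype_fun_eq_card,
      Fintype.card_coe, Fintype.card_coe]
  intro k
  refine ⟨(key k).1, ?_⟩
  rw [(key k).2, (key 1).2, card_Aset hband k, card_Aset hband 1]
  rcases le_total k 1 with h | h
  · exact diff_const hband h
  · exact (diff_const hband h).symm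
end
end

section
/- Let w ∈ ℕ, let π : ℤ → ℤ be a bijection with |π(i) − i| ≤ w for all i, let j* ∈ ℤ, and set n := #{ i ∈ ℤ : j* − w ≤ i ≤ j* + w − 1 and π(i) ≥ j* }. Then there exists a bijection π' : ℤ → ℤ such that: (a) π'(i) = π(i) for every i with i < j* − w or i ≥ j* + w; (b) π' is strictly increasing on the interval [j* − w, j* + w − 1]; and (c) { π'(i) : i < i* } = { j ∈ ℤ : j < j* } where i* := j* + w − n. In particular, π' differs from π in only finitely many places and splits at (i*, j*). -/
/-- **rewiring step.** For a banded permutation `π` (bandwidth `≤ w`) and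
any `j* ∈ ℤ`, with `n = #{ i ∈ [j* − w, j* + w − 1] : π(i) ≥ j* }`, there is a
permutation `π'` of `ℤ` agreeing with `π` outside `[j* − w, j* + w − 1]`, strictly
increasing on that interval, which splits at `(i*, j*)` with `i* = j* + w − n`. -/
theorem rewiring_produces_split (w : ℕ) (π : ℤ ≃ ℤ)
    (hband : ∀ i : ℤ, |π i - i| ≤ (w : ℤ)) (jstar : ℤ) (n : ℕ)
    (hn : n = ((Finset.Icc (jstar - w) (jstar + w - 1)).filter
        (fun i => jstar ≤ π i)).card) :
    ∃ π' : ℤ ≃ ℤ,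
      (∀ i : ℤ, i < jstar - w ∨ jstar + w ≤ i → π' i = π i) ∧
      StrictMonoOn (fun i => π' i) (Set.Icc (jstar - w) (jstar + w - 1)) ∧
      (fun i => π' i) '' {i : ℤ | i < jstar + w - n} = {j : ℤ | j < jstar} := by
  set a : ℤ := jstar - w with ha
  set b : ℤ := jstar + w - 1 with hb
  set I : Finset ℤ := Finset.Icc a b with hIdef
  have hIcard : I.card = 2 * w := by
    rw [hIdef, Int.card_Icc]; omega
  set s : Finset ℤ := I.image π with hsdef
  have hscard : s.card = 2 * w := by
    rw [hsdef, Finset.card_image_of_injective _ π.injective, hIcard]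
  set e := s.orderIsoOfFin hscard with hedef
  -- band lemmas
  have hA : ∀ i : ℤ, i < a → π i < jstar := by
    intro i hi; have := hband i; rw [abs_le] at this; omega
  have hB : ∀ i : ℤ, π i < jstar → i ≤ b := by
    intro i hi; have := hband i; rw [abs_le] at this; omega
  have hnle : n ≤ 2 * w := by
    rw [hn]; exact le_trans (Finset.card_filter_le _ _) hIcard.le
  set m : ℕ := 2 * w - n with hmdef
  have hmz : (m : ℤ) = 2 * (w : ℤ) - n := by omega
  -- count of small values
  set t : Finset ℤ := s.filter (fun x => x < jstar) with htdef
  have ht_eq : t = (I.filter (fun i => π i < jstar)).image π := by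
    ext j
    simp only [htdef, hsdef, Finset.mem_filter, Finset.mem_image]
    constructor
    · rintro ⟨⟨i, hi, rfl⟩, hlt⟩; exact ⟨i, ⟨hi, hlt⟩, rfl⟩
    · rintro ⟨i, ⟨hi, hlt⟩, rfl⟩; exact ⟨⟨i, hi, rfl⟩, hlt⟩
  have htcard : t.card = m := by
    rw [ht_eq, Finset.card_image_of_injective _ π.injective]
    have hsplit := Finset.card_filter_add_card_filter_not
      (s := I) (p := fun i => jstar ≤ π i)
    have : I.filter (fun i => ¬ jstar ≤ π i) = I.filter (fun i => π i < jstar) := by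
      apply Finset.filter_congr; intro i _; simp [not_le]
    rw [this] at hsplit
    omega
  -- the set of indices with small values
  set A : Finset (Fin (2 * w)) :=
    Finset.univ.filter (fun k => (e k : ℤ) < jstar) with hAdef
  have hAcard : A.card = m := by
    rw [← htcard]
    apply Finset.card_bij (fun k _ => (e k : ℤ))
    · intro k hk
      simp only [hAdef, Finset.mem_filter, Finset.mem_univ, true_and] at hk
      exact Finset.mem_filter.mpr ⟨(e k).2, hk⟩
    · intro k₁ _ k₂ _ h
      exact e.injective (Subtype.coe_injective h)
    · intro j hj
      have hj' := Finset.mem_filter.mp hj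
      obtain ⟨k, hk⟩ := e.surjective ⟨j, hj'.1⟩
      refine ⟨k, ?_, by rw [hk]⟩
      simp only [hAdef, Finset.mem_filter, Finset.mem_univ, true_and, hk]
      exact hj'.2
  have hchar : ∀ k : Fin (2 * w), (e k : ℤ) < jstar ↔ (k : ℕ) < m := by
    intro k
    constructor
    · intro hk
      have hsub : Finset.Iic k ⊆ A := by
        intro k' hk'
        simp only [Finset.mem_Iic] at hk'
        simp only [hAdef, Finset.mem_filter, Finset.mem_univ, true_and]
        calc (e k' : ℤ) ≤ (e k : ℤ) := by exact_mod_cast e.monotone hk'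
          _ < jstar := hk
      have := Finset.card_le_card hsub
      rw [hAcard, Fin.card_Iic] at this
      omega
    · intro hk
      by_contra hcon
      push_neg at hcon
      have hsub : A ⊆ Finset.Iio k := by
        intro k' hk'
        simp only [hAdef, Finset.mem_filter, Finset.mem_univ, true_and] at hk'
        simp only [Finset.mem_Iio]
        by_contra hge
        push_neg at hge
        exact absurd (le_trans hcon (by exact_mod_cast e.monotone hge)) (not_le.mpr hk')
      have := Finset.card_le_card hsub
      rw [hAcard, Fin.card_Iio] at this
      omega
  -- define the rewired function
  have hidx : ∀ i ∈ I, ((i - a).toNat < 2 * w) := by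
    intro i hi
    rw [hIdef, Finset.mem_Icc] at hi
    omega
  set f : ℤ → ℤ := fun i =>
    if h : i ∈ I then (e ⟨(i - a).toNat, hidx i h⟩ : ℤ) else π i with hfdef
  have hmem_s : ∀ j : ℤ, j ∈ s ↔ π.symm j ∈ I := by
    intro j
    rw [hsdef, Finset.mem_image]
    constructor
    · rintro ⟨i, hi, rfl⟩; simpa using hi
    · intro h; exact ⟨π.symm j, h, π.apply_symm_apply j⟩
  have hfI : ∀ i ∈ I, f i ∈ s := by
    intro i hi
    simp only [hfdef, dif_pos hi]
    exact (e _).2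
  have hinj : Function.Injective f := by
    intro x y hxy
    by_cases hx : x ∈ I <;> by_cases hy : y ∈ I
    · simp only [hfdef, dif_pos hx, dif_pos hy] at hxy
      have := e.injective (Subtype.coe_injective hxy)
      have h2 : (x - a).toNat = (y - a).toNat := congrArg Fin.val this
      rw [hIdef, Finset.mem_Icc] at hx hy
      omega
    · exfalso
      have h1 : f x ∈ s := hfI x hx
      rw [hxy] at h1
      simp only [hfdef, dif_neg hy] at h1
      rw [hmem_s, Equiv.symm_apply_apply] at h1
      exact hy h1
    · exfalso
      have h1 : f y ∈ s := hfI y hy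
      rw [← hxy] at h1
      simp only [hfdef, dif_neg hx] at h1
      rw [hmem_s, Equiv.symm_apply_apply] at h1
      exact hx h1
    · simp only [hfdef, dif_neg hx, dif_neg hy] at hxy
      exact π.injective hxy
  have hIk : ∀ k : Fin (2 * w), (a + (k : ℕ)) ∈ I := by
    intro k
    rw [hIdef, Finset.mem_Icc]
    have := k.isLt
    omega
  have hfk : ∀ k : Fin (2 * w), f (a + (k : ℕ)) = (e k : ℤ) := by
    intro k
    simp only [hfdef, dif_pos (hIk k)]
    congr 1
    ext
    simp
  have hsurj : Function.Surjective f := by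
    intro j
    by_cases hj : j ∈ s
    · obtain ⟨k, hk⟩ := e.surjective ⟨j, hj⟩
      exact ⟨a + (k : ℕ), by rw [hfk k, hk]⟩
    · refine ⟨π.symm j, ?_⟩
      have hni : π.symm j ∉ I := fun h => hj ((hmem_s j).mpr h)
      simp only [hfdef, dif_neg hni, Equiv.apply_symm_apply]
  refine ⟨Equiv.ofBijective f (show Function.Bijective f from ⟨hinj, hsurj⟩), ?_, ?_, ?_⟩
  · intro i hi
    have hni : i ∉ I := by
      rw [hIdef, Finset.mem_Icc]
      omega
    simp only [Equiv.ofBijective_apply, hfdef, dif_neg hni]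
  · intro x hx y hy hxy
    have hxI : x ∈ I := by rw [hIdef, Finset.mem_Icc]; exact hx
    have hyI : y ∈ I := by rw [hIdef, Finset.mem_Icc]; exact hy
    simp only [Equiv.ofBijective_apply, hfdef, dif_pos hxI, dif_pos hyI]
    have hxI' := hx.1
    have hlt : ((⟨(x - a).toNat, hidx x hxI⟩ : Fin (2 * w))) < ⟨(y - a).toNat, hidx y hyI⟩ := by
      rw [Fin.mk_lt_mk]
      omega
    exact_mod_cast e.strictMono hlt
  · ext j
    simp only [Set.mem_image, Set.mem_setOf_eq, Equiv.ofBijective_apply]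
    constructor
    · rintro ⟨i, hi, rfl⟩
      by_cases hiI : i ∈ I
      · simp only [hfdef, dif_pos hiI]
        rw [hIdef, Finset.mem_Icc] at hiI
        exact (hchar _).mpr (by show (i - a).toNat < m; omega)
      · have hia : i < a := by
          rw [hIdef, Finset.mem_Icc] at hiI
          omega
        simp only [hfdef, dif_neg hiI]
        exact hA i hia
    · intro hj
      by_cases hjs : j ∈ s
      · obtain ⟨k, hk⟩ := e.surjective ⟨j, hjs⟩
        have hkm : (k : ℕ) < m := (hchar k).mp (by rw [hk]; exact hj)
        refine ⟨a + (k : ℕ), by omega, by rw [hfk k, hk]⟩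
      · have hni : π.symm j ∉ I := fun h => hjs ((hmem_s j).mpr h)
        have hjb : π.symm j ≤ b := by
          apply hB
          rw [Equiv.apply_symm_apply]
          exact hj
        have hja : π.symm j < a := by
          rw [hIdef, Finset.mem_Icc] at hni
          omega
        refine ⟨π.symm j, by omega, ?_⟩
        simp only [hfdef, dif_neg hni, Equiv.apply_symm_apply]
end

section
/- Let w ≥ 1 and let π : ℤ → ℤ be a bijection with |π(i) − i| ≤ w for all i which is centered, i.e. for every j* ∈ ℤ the number of integers i with j* − w ≤ i ≤ j* + w − 1 and π(i) ≥ j* equals w. Then there exist bijections β, γ : ℤ → ℤ with π = γ ∘ β such that β maps each block { 2wk, 2wk+1, …, 2wk + 2w − 1 } (k ∈ ℤ) onto itself, and γ maps each offset block { 2wk + w, 2wk + w + 1, …, 2wk + 3w − 1 } (k ∈ ℤ) onto itself. Equivalently, the centered banded permutation matrix factors as a product B·C of two block-diagonal permutation matrices with blocks of size 2w, the blocks of C offset by w from those of B. -/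
section CFBAux

/-- The block `[N*k, N*k + N - 1]`. -/
noncomputable def cfB (N k : ℤ) : Finset ℤ := Finset.Icc (N * k) (N * k + N - 1)

/-- The upper half of a block. -/
noncomputable def cfU (N W k : ℤ) : Finset ℤ := Finset.Icc (N * k + W) (N * k + N - 1)

/-- The lower half of a block. -/
noncomputable def cfL (N W k : ℤ) : Finset ℤ := Finset.Icc (N * k) (N * k + W - 1)

/-- Elements of the block whose image under `π` is large. -/
noncomputable def cfS (π : ℤ ≃ ℤ) (N W k : ℤ) : Finset ℤ :=
  (cfB N k).filter (fun i => N * k + W ≤ π i)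

/-- Elements of the block whose image under `π` is small. -/
noncomputable def cfT (π : ℤ ≃ ℤ) (N W k : ℤ) : Finset ℤ :=
  (cfB N k).filter (fun i => ¬ (N * k + W ≤ π i))

lemma cfB_div {N : ℤ} (hN : N ≠ 0) {i k : ℤ} (h : i ∈ cfB N k) : i / N = k := by
  simp only [cfB, Finset.mem_Icc] at h
  have h1 : i = (i - N * k) + N * k := by ring
  rw [h1, Int.add_mul_ediv_left _ _ hN,
    Int.ediv_eq_zero_of_lt (by linarith [h.1]) (by linarith [h.2])]
  ring

lemma cfB_self {N : ℤ} (hN : 0 < N) (i : ℤ) : i ∈ cfB N (i / N) := by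
  have h1 := Int.mul_ediv_add_emod i N
  have h2 := Int.emod_nonneg i (by omega : N ≠ 0)
  have h3 := Int.emod_lt_of_pos i hN
  simp only [cfB, Finset.mem_Icc]
  constructor <;> linarith

end CFBAux

/-- **Theorem 2.** A centered permutation of `ℤ` with bandwidth `w ≥ 1`
factors as `π = γ ∘ β`, where `β` preserves each block `[2wk, 2wk + 2w − 1]` and `γ`
preserves each offset block `[2wk + w, 2wk + 3w − 1]`. -/
theorem centered_factors_into_blocks (w : ℕ) (hw : 1 ≤ w) (π : ℤ ≃ ℤ)
    (hband : ∀ i : ℤ, |π i - i| ≤ (w : ℤ))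
    (hcentered : ∀ jstar : ℤ,
      ((Finset.Icc (jstar - w) (jstar + w - 1)).filter
        (fun i => jstar ≤ π i)).card = w) :
    ∃ β γ : ℤ ≃ ℤ,
      (∀ i : ℤ, π i = γ (β i)) ∧
      (∀ k : ℤ, (fun i => β i) '' Set.Icc (2 * w * k) (2 * w * k + 2 * w - 1) =
        Set.Icc (2 * w * k) (2 * w * k + 2 * w - 1)) ∧
      (∀ k : ℤ, (fun i => γ i) '' Set.Icc (2 * w * k + w) (2 * w * k + 3 * w - 1) =
        Set.Icc (2 * w * k + w) (2 * w * k + 3 * w - 1)) := by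
  classical
  have hW : (1 : ℤ) ≤ (w : ℤ) := by exact_mod_cast hw
  set W : ℤ := (w : ℤ) with hWdef
  set N : ℤ := 2 * W with hNdef
  have hN0 : N ≠ 0 := by omega
  have hNpos : 0 < N := by omega
  -- cardinalities
  have hband' : ∀ i : ℤ, i - W ≤ π i ∧ π i ≤ i + W := by
    intro i
    have := abs_le.mp (hband i)
    constructor <;> linarith [this.1, this.2]
  have hBcard : ∀ k, (cfB N k).card = 2 * w := by
    intro k
    rw [cfB, Int.card_Icc]
    have : N * k + N - 1 + 1 - N * k = N := by ring
    rw [this]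
    omega
  have hUcard : ∀ k, (cfU N W k).card = w := by
    intro k
    rw [cfU, Int.card_Icc]
    have : N * k + N - 1 + 1 - (N * k + W) = N - W := by ring
    rw [this]
    omega
  have hLcard : ∀ k, (cfL N W k).card = w := by
    intro k
    rw [cfL, Int.card_Icc]
    have : N * k + W - 1 + 1 - N * k = W := by ring
    rw [this]
    omega
  have hScard : ∀ k, (cfS π N W k).card = w := by
    intro k
    have h := hcentered (N * k + W)
    have he : Finset.Icc (N * k + W - W) (N * k + W + W - 1) = Finset.Icc (N * k) (N * k + N - 1) := by
      congr 1 <;> ring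
    rw [he] at h
    exact h
  have hTcard : ∀ k, (cfT π N W k).card = w := by
    intro k
    have h := Finset.card_filter_add_card_filter_not
      (s := cfB N k) (p := fun i => N * k + W ≤ π i)
    have h1 := hScard k
    have h2 := hBcard k
    simp only [cfS, cfT] at *
    omega
  -- half-block equivalences
  let eS : ∀ k : ℤ, {x // x ∈ cfS π N W k} ≃ {x // x ∈ cfU N W k} :=
    fun k => Finset.equivOfCardEq (by rw [hScard, hUcard])
  let eT : ∀ k : ℤ, {x // x ∈ cfT π N W k} ≃ {x // x ∈ cfL N W k} :=
    fun k => Finset.equivOfCardEq (by rw [hTcard, hLcard])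
  -- the glued function
  obtain ⟨f, hfS, hfT⟩ :
      ∃ f : ℤ → ℤ,
        (∀ (i k : ℤ) (h : i ∈ cfS π N W k), f i = ((eS k) ⟨i, h⟩ : ℤ)) ∧
        (∀ (i k : ℤ) (h : i ∈ cfT π N W k), f i = ((eT k) ⟨i, h⟩ : ℤ)) := by
    refine ⟨fun i =>
      if h : N * (i / N) + W ≤ π i then
        ((eS (i / N)) ⟨i, Finset.mem_filter.mpr ⟨cfB_self hNpos i, h⟩⟩ : ℤ)
      else
        ((eT (i / N)) ⟨i, Finset.mem_filter.mpr ⟨cfB_self hNpos i, h⟩⟩ : ℤ), ?_, ?_⟩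
    · intro i k h
      obtain ⟨hB, hc⟩ := Finset.mem_filter.mp h
      have hk : i / N = k := cfB_div hN0 hB
      subst hk
      simp only [dif_pos hc]
    · intro i k h
      obtain ⟨hB, hc⟩ := Finset.mem_filter.mp h
      have hk : i / N = k := cfB_div hN0 hB
      subst hk
      simp only [dif_neg hc]
  -- f maps each block into itself
  have hWN : W + W = N := by omega
  have hUB : ∀ k, ∀ x ∈ cfU N W k, x ∈ cfB N k := by
    intro k x hx
    simp only [cfU, Finset.mem_Icc] at hx
    simp only [cfB, Finset.mem_Icc]
    constructor <;> linarith [hx.1, hx.2, hWN, hW]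
  have hLB : ∀ k, ∀ x ∈ cfL N W k, x ∈ cfB N k := by
    intro k x hx
    simp only [cfL, Finset.mem_Icc] at hx
    simp only [cfB, Finset.mem_Icc]
    constructor <;> linarith [hx.1, hx.2, hWN, hW]
  have hfB : ∀ (i k : ℤ), i ∈ cfB N k → f i ∈ cfB N k := by
    intro i k hB
    by_cases hc : N * k + W ≤ π i
    · have h : i ∈ cfS π N W k := Finset.mem_filter.mpr ⟨hB, hc⟩
      rw [hfS i k h]
      exact hUB k _ ((eS k) ⟨i, h⟩).2
    · have h : i ∈ cfT π N W k := Finset.mem_filter.mpr ⟨hB, hc⟩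
      rw [hfT i k h]
      exact hLB k _ ((eT k) ⟨i, h⟩).2
  -- injectivity
  have hinj : Function.Injective f := by
    intro i j hij
    have hBi : i ∈ cfB N (i / N) := cfB_self hNpos i
    have hBj : j ∈ cfB N (j / N) := cfB_self hNpos j
    have hki : (f i) / N = i / N := cfB_div hN0 (hfB i (i / N) hBi)
    have hkj : (f j) / N = j / N := cfB_div hN0 (hfB j (j / N) hBj)
    have hkk : i / N = j / N := by rw [← hki, ← hkj, hij]
    set k := i / N with hk
    rw [← hkk] at hBj
    by_cases hci : N * k + W ≤ π i <;> by_cases hcj : N * k + W ≤ π j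
    · have hi : i ∈ cfS π N W k := Finset.mem_filter.mpr ⟨hBi, hci⟩
      have hj : j ∈ cfS π N W k := Finset.mem_filter.mpr ⟨hBj, hcj⟩
      rw [hfS i k hi, hfS j k hj] at hij
      have := (eS k).injective (Subtype.coe_injective hij)
      exact congrArg Subtype.val this
    · have hi : i ∈ cfS π N W k := Finset.mem_filter.mpr ⟨hBi, hci⟩
      have hj : j ∈ cfT π N W k := Finset.mem_filter.mpr ⟨hBj, hcj⟩
      have h1 : f i ∈ cfU N W k := by rw [hfS i k hi]; exact ((eS k) ⟨i, hi⟩).2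
      have h2 : f j ∈ cfL N W k := by rw [hfT j k hj]; exact ((eT k) ⟨j, hj⟩).2
      simp only [cfU, cfL, Finset.mem_Icc] at h1 h2
      exfalso; rw [hij] at h1; linarith [h1.1, h2.2]
    · have hi : i ∈ cfT π N W k := Finset.mem_filter.mpr ⟨hBi, hci⟩
      have hj : j ∈ cfS π N W k := Finset.mem_filter.mpr ⟨hBj, hcj⟩
      have h1 : f i ∈ cfL N W k := by rw [hfT i k hi]; exact ((eT k) ⟨i, hi⟩).2
      have h2 : f j ∈ cfU N W k := by rw [hfS j k hj]; exact ((eS k) ⟨j, hj⟩).2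
      simp only [cfU, cfL, Finset.mem_Icc] at h1 h2
      exfalso; rw [hij] at h1; linarith [h1.2, h2.1]
    · have hi : i ∈ cfT π N W k := Finset.mem_filter.mpr ⟨hBi, hci⟩
      have hj : j ∈ cfT π N W k := Finset.mem_filter.mpr ⟨hBj, hcj⟩
      rw [hfT i k hi, hfT j k hj] at hij
      have := (eT k).injective (Subtype.coe_injective hij)
      exact congrArg Subtype.val this
  -- surjectivity
  have hsurj : Function.Surjective f := by
    intro y
    set k := y / N with hk
    have hBy : y ∈ cfB N k := cfB_self hNpos y
    have hBy' := hBy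
    simp only [cfB, Finset.mem_Icc] at hBy'
    by_cases hc : N * k + W ≤ y
    · have hyU : y ∈ cfU N W k := by
        simp only [cfU, Finset.mem_Icc]; exact ⟨hc, hBy'.2⟩
      set x := (eS k).symm ⟨y, hyU⟩ with hx
      refine ⟨(x : ℤ), ?_⟩
      rw [hfS (x : ℤ) k x.2]
      have : (⟨(x : ℤ), x.2⟩ : {z // z ∈ cfS π N W k}) = x := rfl
      rw [this, hx, Equiv.apply_symm_apply]
    · have hyL : y ∈ cfL N W k := by
        simp only [cfL, Finset.mem_Icc]; exact ⟨hBy'.1, by omega⟩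
      set x := (eT k).symm ⟨y, hyL⟩ with hx
      refine ⟨(x : ℤ), ?_⟩
      rw [hfT (x : ℤ) k x.2]
      have : (⟨(x : ℤ), x.2⟩ : {z // z ∈ cfT π N W k}) = x := rfl
      rw [this, hx, Equiv.apply_symm_apply]
  -- the permutations
  let β : ℤ ≃ ℤ := Equiv.ofBijective f ⟨hinj, hsurj⟩
  let γ : ℤ ≃ ℤ := β.symm.trans π
  have hβf : ∀ i, β i = f i := fun i => rfl
  have himgB : ∀ k, Finset.image f (cfB N k) = cfB N k := by
    intro k
    apply Finset.eq_of_subset_of_card_le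
    · intro y hy
      obtain ⟨i, hi, rfl⟩ := Finset.mem_image.mp hy
      exact hfB i k hi
    · rw [Finset.card_image_of_injective _ hinj]
  refine ⟨β, γ, ?_, ?_, ?_⟩
  · intro i
    show π i = π (β.symm (β i))
    rw [Equiv.symm_apply_apply]
  · intro k
    have h1 : (fun i => β i) = f := funext hβf
    rw [h1]
    have h2 : Set.Icc (N * k) (N * k + N - 1) = ↑(cfB N k) := by
      rw [cfB, Finset.coe_Icc]
    rw [h2, ← Finset.coe_image, himgB k]
  · intro k
    -- γ maps the offset block into itself
    have hmem : ∀ x ∈ Finset.Icc (N * k + W) (N * k + 3 * W - 1),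
        γ x ∈ Finset.Icc (N * k + W) (N * k + 3 * W - 1) := by
      intro x hx
      simp only [Finset.mem_Icc] at hx
      have hγ : γ x = π (β.symm x) := rfl
      set i := β.symm x with hi
      have hfi : f i = x := by rw [← hβf]; exact β.apply_symm_apply x
      have hbandi := hband' i
      rw [hγ]
      simp only [Finset.mem_Icc]
      by_cases hcase : x ≤ N * k + N - 1
      · -- x in the upper half of block k
        have hxB : x ∈ cfB N k := by
          simp only [cfB, Finset.mem_Icc]; exact ⟨by linarith [hx.1], hcase⟩
        have hiB : i ∈ cfB N k := by
          have h1 : (f i) / N = k := by rw [hfi]; exact cfB_div hN0 hxB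
          have h2 : (f i) / N = i / N := cfB_div hN0 (hfB i (i / N) (cfB_self hNpos i))
          rw [h2] at h1; rw [← h1]; exact cfB_self hNpos i
        have hiB' := hiB
        simp only [cfB, Finset.mem_Icc] at hiB'
        have hci : N * k + W ≤ π i := by
          by_contra hci
          have hT : i ∈ cfT π N W k := Finset.mem_filter.mpr ⟨hiB, hci⟩
          have : f i ∈ cfL N W k := by rw [hfT i k hT]; exact ((eT k) ⟨i, hT⟩).2
          simp only [cfL, Finset.mem_Icc] at this
          rw [hfi] at this
          linarith [this.2, hx.1]
        exact ⟨hci, by linarith [hbandi.2, hiB'.2]⟩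
      · -- x in the lower half of block k+1
        have he1 : N * (k + 1) = N * k + N := by ring
        have hxB : x ∈ cfB N (k + 1) := by
          simp only [cfB, Finset.mem_Icc]
          constructor <;> [omega; linarith [hx.2]]
        have hiB : i ∈ cfB N (k + 1) := by
          have h1 : (f i) / N = k + 1 := by rw [hfi]; exact cfB_div hN0 hxB
          have h2 : (f i) / N = i / N := cfB_div hN0 (hfB i (i / N) (cfB_self hNpos i))
          rw [h2] at h1; rw [← h1]; exact cfB_self hNpos i
        have hiB' := hiB
        simp only [cfB, Finset.mem_Icc] at hiB'
        have hci : ¬ (N * (k + 1) + W ≤ π i) := by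
          intro hci
          have hSk : i ∈ cfS π N W (k + 1) := Finset.mem_filter.mpr ⟨hiB, hci⟩
          have : f i ∈ cfU N W (k + 1) := by rw [hfS i (k + 1) hSk]; exact ((eS (k + 1)) ⟨i, hSk⟩).2
          simp only [cfU, Finset.mem_Icc] at this
          rw [hfi] at this
          linarith [this.1, hx.2]
        push_neg at hci
        constructor
        · linarith [hbandi.1, hiB'.1]
        · linarith [hci]
    have himg : Finset.image (fun i => γ i) (Finset.Icc (N * k + W) (N * k + 3 * W - 1)) =
        Finset.Icc (N * k + W) (N * k + 3 * W - 1) := by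
      apply Finset.eq_of_subset_of_card_le
      · intro y hy
        obtain ⟨x, hxmem, rfl⟩ := Finset.mem_image.mp hy
        exact hmem x hxmem
      · rw [Finset.card_image_of_injective _ γ.injective]
    rw [← Finset.coe_Icc, ← Finset.coe_image, himg]
end

section
/- Let π : ℤ → ℤ be a bijection with |π(i) − i| ≤ 1 for all i ∈ ℤ. If π is neither the map i ↦ i − 1 nor the map i ↦ i + 1, then π is centered: for every j ∈ ℤ, exactly one of the two integers i ∈ { j − 1, j } satisfies π(i) ≥ j. (Thus the only tridiagonal biinfinite permutation matrices with nonzero plus-index are the forward and backward shifts.) -/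
lemma shift_all (π : ℤ ≃ ℤ) (hband : ∀ i : ℤ, |π i - i| ≤ 1) (j : ℤ)
    (h1 : π (j - 1) = j) (h2 : π j = j + 1) : ∀ i : ℤ, π i = i + 1 := by
  have fwd : ∀ n : ℕ, π (j + n - 1) = j + n ∧ π (j + n) = j + n + 1 := by
    intro n
    induction n with
    | zero => simpa using ⟨h1, h2⟩
    | succ n ih =>
      have hb := abs_le.mp (hband (j + n + 1))
      have hx : π (j + n + 1) ≠ j + n := by
        intro h
        have := π.injective (h.trans ih.1.symm); omega
      have hy : π (j + n + 1) ≠ j + n + 1 := by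
        intro h
        have := π.injective (h.trans ih.2.symm); omega
      constructor
      · have : (j : ℤ) + (n + 1 : ℕ) - 1 = j + n := by push_cast; ring
        rw [this]; push_cast; omega
      · have : (j : ℤ) + (n + 1 : ℕ) = j + n + 1 := by push_cast; ring
        rw [this]; push_cast at *; omega
  have bwd : ∀ n : ℕ, π (j - n - 1) = j - n ∧ π (j - n) = j - n + 1 := by
    intro n
    induction n with
    | zero => simpa using ⟨h1, h2⟩
    | succ n ih =>
      obtain ⟨i, hi⟩ := π.surjective (j - n - 1)
      have hb := abs_le.mp (hband i)
      rw [hi] at hb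
      have hx : i ≠ j - n - 1 := by
        intro h; rw [h, ih.1] at hi; omega
      have hy : i ≠ j - n := by
        intro h; rw [h, ih.2] at hi; omega
      have hiv : i = j - n - 2 := by omega
      constructor
      · have e1 : (j : ℤ) - (n + 1 : ℕ) - 1 = i := by push_cast; omega
        rw [e1, hi]; push_cast; ring
      · have e2 : (j : ℤ) - (n + 1 : ℕ) = j - n - 1 := by push_cast; ring
        rw [e2, ih.1]; ring
  intro i
  rcases le_or_gt j i with h | h
  · obtain ⟨n, hn⟩ : ∃ n : ℕ, i = j + n := ⟨(i - j).toNat, by omega⟩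
    rw [hn]; exact (fwd n).2
  · obtain ⟨n, hn⟩ : ∃ n : ℕ, i = j - n := ⟨(j - i).toNat, by omega⟩
    rw [hn]; exact (bwd n).2

/-- A permutation `π` of `ℤ` with bandwidth at most `1` that is neither
the backward shift `i ↦ i − 1` nor the forward shift `i ↦ i + 1` is centered: for every
`j ∈ ℤ`, exactly one of the two integers `i ∈ {j − 1, j}` satisfies `π(i) ≥ j`. -/
theorem tridiagonal_permutation_centered (π : ℤ ≃ ℤ)
    (hband : ∀ i : ℤ, |π i - i| ≤ 1)
    (hne₁ : ¬ ∀ i : ℤ, π i = i - 1)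
    (hne₂ : ¬ ∀ i : ℤ, π i = i + 1) :
    ∀ j : ℤ, Xor' (j ≤ π (j - 1)) (j ≤ π j) := by
  intro j
  have hb1 := abs_le.mp (hband (j - 1))
  have hb2 := abs_le.mp (hband j)
  by_cases ha : j ≤ π (j - 1) <;> by_cases hb : j ≤ π j
  · -- both: forward shift, contradiction
    exfalso
    have h1 : π (j - 1) = j := by omega
    have h2 : π j = j + 1 := by
      have : π j ≠ j := by
        intro h
        have := π.injective (h.trans h1.symm); omega
      omega
    exact hne₂ (shift_all π hband j h1 h2)
  · exact Or.inl ⟨ha, hb⟩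
  · exact Or.inr ⟨hb, ha⟩
  · -- neither: backward shift, contradiction
    exfalso
    have h2 : π j = j - 1 := by omega
    have h1 : π (j - 1) = j - 2 := by
      have : π (j - 1) ≠ j - 1 := by
        intro h
        have := π.injective (h.trans h2.symm); omega
      omega
    have hband' : ∀ k : ℤ, |π.symm k - k| ≤ 1 := by
      intro k
      have := hband (π.symm k)
      rw [π.apply_symm_apply] at this
      rw [abs_sub_comm]; exact this
    have s1 : π.symm ((j - 1) - 1) = j - 1 := by
      have : (j - 1) - 1 = j - 2 := by ring
      rw [this, ← h1, π.symm_apply_apply]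
    have s2 : π.symm (j - 1) = (j - 1) + 1 := by
      rw [show (j-1)+1 = j from by ring, ← h2, π.symm_apply_apply]
    have hall := shift_all π.symm hband' (j - 1) s1 s2
    apply hne₁
    intro i
    have := hall (π i)
    rw [π.symm_apply_apply] at this
    omega
end

section
/- (Asplund's theorem.) Let A be an invertible n × n real matrix and let p, k be integers with p ≥ 0 and k ≥ 1. Then the following are equivalent: (i) for all subsets I, J of the index set {1, …, n} such that j − i > p for every i ∈ I and j ∈ J, the submatrix (a_{ij})_{i∈I, j∈J} has rank < k; (ii) for all subsets I, J of {1, …, n} such that j > i − p for every i ∈ I and j ∈ J, the submatrix ((A⁻¹)_{ij})_{i∈I, j∈J} has rank < p + k. -/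
open Matrix Module LinearMap

variable {n : ℕ}

/-- Extend-by-zero inclusion of a coordinate subspace. -/
noncomputable def inc (P : Fin n → Prop) [DecidablePred P] :
    ({i // P i} → ℝ) →ₗ[ℝ] (Fin n → ℝ) where
  toFun x i := if h : P i then x ⟨i, h⟩ else 0
  map_add' x y := by funext i; by_cases h : P i <;> simp [h]
  map_smul' c x := by funext i; by_cases h : P i <;> simp [h]

/-- Coordinate projection. -/
noncomputable def prj (P : Fin n → Prop) [DecidablePred P] :
    (Fin n → ℝ) →ₗ[ℝ] ({i // P i} → ℝ) :=
  LinearMap.funLeft ℝ ℝ Subtype.val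

@[simp] lemma prj_apply (P : Fin n → Prop) [DecidablePred P] (y : Fin n → ℝ) (i : {i // P i}) :
    prj P y i = y i := rfl

@[simp] lemma inc_apply_pos (P : Fin n → Prop) [DecidablePred P] (x : {i // P i} → ℝ)
    (i : Fin n) (h : P i) : inc P x i = x ⟨i, h⟩ := by simp [inc, h]

@[simp] lemma inc_apply_neg (P : Fin n → Prop) [DecidablePred P] (x : {i // P i} → ℝ)
    (i : Fin n) (h : ¬ P i) : inc P x i = 0 := by simp [inc, h]

lemma prj_inc (P : Fin n → Prop) [DecidablePred P] (x : {i // P i} → ℝ) :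
    prj P (inc P x) = x := by
  funext i
  rw [prj_apply, inc_apply_pos _ _ _ i.2]

lemma block_mulVecLin (M : Matrix (Fin n) (Fin n) ℝ) (P Q : Fin n → Prop)
    [DecidablePred P] [DecidablePred Q] :
    (M.submatrix (fun a : {i // P i} => (a : Fin n))
      (fun b : {j // Q j} => (b : Fin n))).mulVecLin
    = (prj P) ∘ₗ M.mulVecLin ∘ₗ inc Q := by
  refine LinearMap.ext fun x => funext fun i => ?_
  simp only [mulVecLin_apply, mulVec, dotProduct, submatrix_apply, LinearMap.comp_apply,
    prj_apply]
  rw [← Fintype.sum_subtype_add_sum_subtype Q (fun j => M (i : Fin n) j * inc Q x j)]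
  have h1 : ∀ j : {j // ¬ Q j}, M (i : Fin n) j * inc Q x j = 0 := by
    intro j; rw [inc_apply_neg _ _ _ j.2, mul_zero]
  rw [Finset.sum_congr rfl (fun j _ => h1 j), Finset.sum_const_zero, add_zero]
  refine Finset.sum_congr rfl fun j _ => ?_
  rw [inc_apply_pos _ _ _ j.2]

/-- The linear map corresponding to the block of `M` with rows `< t` and columns `≥ s`. -/
noncomputable def Fm (M : Matrix (Fin n) (Fin n) ℝ) (s t : ℕ) :
    ({j : Fin n // s ≤ (j : ℕ)} → ℝ) →ₗ[ℝ] ({i : Fin n // (i : ℕ) < t} → ℝ) :=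
  prj (fun i : Fin n => (i : ℕ) < t) ∘ₗ M.mulVecLin ∘ₗ inc (fun j : Fin n => s ≤ (j : ℕ))

/-- The complementary map: rows `≥ t`, columns `≥ s`. -/
noncomputable def Gm (M : Matrix (Fin n) (Fin n) ℝ) (s t : ℕ) :
    ({j : Fin n // s ≤ (j : ℕ)} → ℝ) →ₗ[ℝ] ({i : Fin n // t ≤ (i : ℕ)} → ℝ) :=
  prj (fun i : Fin n => t ≤ (i : ℕ)) ∘ₗ M.mulVecLin ∘ₗ inc (fun j : Fin n => s ≤ (j : ℕ))

lemma inc_Gm (M : Matrix (Fin n) (Fin n) ℝ) (s t : ℕ) (x : {j : Fin n // s ≤ (j : ℕ)} → ℝ)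
    (hx : Fm M s t x = 0) :
    inc (fun i : Fin n => t ≤ (i : ℕ)) (Gm M s t x)
      = M.mulVecLin (inc (fun j : Fin n => s ≤ (j : ℕ)) x) := by
  funext i
  by_cases h : t ≤ (i : ℕ)
  · rw [inc_apply_pos _ _ _ h]; rfl
  · rw [inc_apply_neg _ _ _ h]
    exact (congrFun hx ⟨i, not_le.mp h⟩).symm

lemma helper2 (M N : Matrix (Fin n) (Fin n) ℝ)
    (hNM : N.mulVecLin.comp M.mulVecLin = LinearMap.id) (s t : ℕ)
    (x : {j : Fin n // s ≤ (j : ℕ)} → ℝ) (hx : Fm M s t x = 0) :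
    Fm N t s (Gm M s t x) = 0 ∧ Gm N t s (Gm M s t x) = x := by
  have key := inc_Gm M s t x hx
  have hN : N.mulVecLin (inc (fun i : Fin n => t ≤ (i : ℕ)) (Gm M s t x))
      = inc (fun j : Fin n => s ≤ (j : ℕ)) x := by
    rw [key]
    exact LinearMap.congr_fun hNM _
  constructor
  · funext j
    show prj _ (N.mulVecLin (inc _ (Gm M s t x))) j = 0
    rw [hN, prj_apply]
    exact inc_apply_neg (fun j : Fin n => s ≤ (j : ℕ)) x j.1 (not_le.mpr j.2)
  · funext j
    show prj _ (N.mulVecLin (inc _ (Gm M s t x))) j = x j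
    rw [hN, prj_apply]
    exact inc_apply_pos (fun j : Fin n => s ≤ (j : ℕ)) x j.1 j.2

/-- The nullity-theorem identity for corner blocks. -/
lemma key_identity (A : Matrix (Fin n) (Fin n) ℝ) (hA : IsUnit A) (s t : ℕ) :
    ((A⁻¹).submatrix (fun a : {i : Fin n // (i : ℕ) < t} => (a : Fin n))
        (fun b : {j : Fin n // s ≤ (j : ℕ)} => (b : Fin n))).rank
      + Fintype.card {i : Fin n // t ≤ (i : ℕ)}
    = (A.submatrix (fun a : {i : Fin n // (i : ℕ) < s} => (a : Fin n))
        (fun b : {j : Fin n // t ≤ (j : ℕ)} => (b : Fin n))).rank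
      + Fintype.card {j : Fin n // s ≤ (j : ℕ)} := by
  have hdet := (Matrix.isUnit_iff_isUnit_det A).mp hA
  have h1 : A.mulVecLin.comp (A⁻¹).mulVecLin = LinearMap.id := by
    rw [← mulVecLin_mul, Matrix.mul_nonsing_inv _ hdet, mulVecLin_one]
  have h2 : (A⁻¹).mulVecLin.comp A.mulVecLin = LinearMap.id := by
    rw [← mulVecLin_mul, Matrix.nonsing_inv_mul _ hdet, mulVecLin_one]
  have rB : ((A⁻¹).submatrix (fun a : {i : Fin n // (i : ℕ) < t} => (a : Fin n))
        (fun b : {j : Fin n // s ≤ (j : ℕ)} => (b : Fin n))).rank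
      = finrank ℝ (LinearMap.range (Fm (A⁻¹) s t)) := by
    rw [Matrix.rank, block_mulVecLin]; rfl
  have rA : (A.submatrix (fun a : {i : Fin n // (i : ℕ) < s} => (a : Fin n))
        (fun b : {j : Fin n // t ≤ (j : ℕ)} => (b : Fin n))).rank
      = finrank ℝ (LinearMap.range (Fm A t s)) := by
    rw [Matrix.rank, block_mulVecLin]; rfl
  have hΦ : ∀ x ∈ LinearMap.ker (Fm (A⁻¹) s t), Gm (A⁻¹) s t x ∈ LinearMap.ker (Fm A t s) :=
    fun x hx => LinearMap.mem_ker.mpr (helper2 (A⁻¹) A h1 s t x (LinearMap.mem_ker.mp hx)).1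
  have hΨ : ∀ x ∈ LinearMap.ker (Fm A t s), Gm A t s x ∈ LinearMap.ker (Fm (A⁻¹) s t) :=
    fun x hx => LinearMap.mem_ker.mpr (helper2 A (A⁻¹) h2 t s x (LinearMap.mem_ker.mp hx)).1
  have e : (LinearMap.ker (Fm (A⁻¹) s t)) ≃ₗ[ℝ] (LinearMap.ker (Fm A t s)) := by
    refine LinearEquiv.ofLinear ((Gm (A⁻¹) s t).restrict hΦ) ((Gm A t s).restrict hΨ) ?_ ?_
    · refine LinearMap.ext fun x => Subtype.ext ?_
      exact (helper2 A (A⁻¹) h2 t s x.1 (LinearMap.mem_ker.mp x.2)).2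
    · refine LinearMap.ext fun x => Subtype.ext ?_
      exact (helper2 (A⁻¹) A h1 s t x.1 (LinearMap.mem_ker.mp x.2)).2
  have k1 := LinearMap.finrank_range_add_finrank_ker (Fm (A⁻¹) s t)
  have k2 := LinearMap.finrank_range_add_finrank_ker (Fm A t s)
  rw [Module.finrank_fintype_fun_eq_card] at k1 k2
  have k3 := e.finrank_eq
  rw [rA, rB]
  omega

/-- Push-forward (sum over fibers) linear map along `g`. -/
noncomputable def pushf {δ β : Type*} [Fintype δ] [DecidableEq β] (g : δ → β) :
    (δ → ℝ) →ₗ[ℝ] (β → ℝ) where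
  toFun x b := ∑ d ∈ Finset.univ.filter (fun d => g d = b), x d
  map_add' x y := by funext b; simp [Finset.sum_add_distrib]
  map_smul' c x := by funext b; simp [Finset.mul_sum]

lemma submatrix_mulVecLin_general {α β γ δ : Type*} [Fintype β] [Fintype δ] [DecidableEq β]
    (M : Matrix α β ℝ) (f : γ → α) (g : δ → β) :
    (M.submatrix f g).mulVecLin
      = (LinearMap.funLeft ℝ ℝ f) ∘ₗ M.mulVecLin ∘ₗ pushf g := by
  refine LinearMap.ext fun x => funext fun a => ?_
  simp only [mulVecLin_apply, mulVec, dotProduct, submatrix_apply, LinearMap.comp_apply,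
    LinearMap.funLeft_apply, pushf, LinearMap.coe_mk, AddHom.coe_mk]
  calc ∑ d, M (f a) (g d) * x d
      = ∑ b, ∑ d ∈ Finset.univ.filter (fun d => g d = b), M (f a) (g d) * x d :=
        (Finset.sum_fiberwise _ _ _).symm
    _ = ∑ b, M (f a) b * ∑ d ∈ Finset.univ.filter (fun d => g d = b), x d := by
        refine Finset.sum_congr rfl fun b _ => ?_
        rw [Finset.mul_sum]
        refine Finset.sum_congr rfl fun d hd => ?_
        rw [(Finset.mem_filter.mp hd).2]

/-- Taking an arbitrary submatrix does not increase the rank. -/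
lemma rank_submatrix_le' {α β γ δ : Type*} [Fintype α] [Fintype β] [Fintype γ] [Fintype δ]
    [DecidableEq β] (M : Matrix α β ℝ) (f : γ → α) (g : δ → β) :
    (M.submatrix f g).rank ≤ M.rank := by
  rw [Matrix.rank, Matrix.rank, submatrix_mulVecLin_general]
  have hle : LinearMap.range ((LinearMap.funLeft ℝ ℝ f) ∘ₗ M.mulVecLin ∘ₗ pushf g)
      ≤ Submodule.map (LinearMap.funLeft ℝ ℝ f) (LinearMap.range M.mulVecLin) := by
    rw [LinearMap.range_comp]
    exact Submodule.map_mono (LinearMap.range_comp_le_range _ _)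
  exact le_trans (Submodule.finrank_mono hle) (Submodule.finrank_map_le _ _)

lemma card_ge_eq (t : ℕ) (ht : t ≤ n) : Fintype.card {i : Fin n // t ≤ (i : ℕ)} = n - t := by
  have e : {i : Fin n // t ≤ (i : ℕ)} ≃ Fin (n - t) :=
    { toFun := fun i => ⟨(i.1 : ℕ) - t, by have := i.1.isLt; have := i.2; omega⟩
      invFun := fun k => ⟨⟨t + k.1, by have := k.isLt; omega⟩, Nat.le_add_right _ _⟩
      left_inv := fun i => Subtype.ext (Fin.ext (by have := i.2; simp; omega))
      right_inv := fun k => Fin.ext (by simp) }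
  rw [Fintype.card_congr e, Fintype.card_fin]

/-- **Asplund's theorem.** For an invertible `n × n` real matrix `A` and
integers `p ≥ 0`, `k ≥ 1`: all submatrices of `A` above the `p`-th superdiagonal have
rank `< k` iff all submatrices of `A⁻¹` above the `p`-th subdiagonal have rank `< p + k`. -/
theorem asplund (n : ℕ) (A : Matrix (Fin n) (Fin n) ℝ) (hA : IsUnit A)
    (p k : ℕ) (hk : 1 ≤ k) :
    (∀ I J : Finset (Fin n), (∀ i ∈ I, ∀ j ∈ J, (i : ℕ) + p < (j : ℕ)) →
      (A.submatrix (fun a : I => (a : Fin n)) (fun b : J => (b : Fin n))).rank < k) ↔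
    (∀ I J : Finset (Fin n), (∀ i ∈ I, ∀ j ∈ J, (i : ℕ) < (j : ℕ) + p) →
      ((A⁻¹).submatrix (fun a : I => (a : Fin n)) (fun b : J => (b : Fin n))).rank
        < p + k) := by
  classical
  constructor
  · -- (i) → (ii)
    intro h I J hIJ
    rcases J.eq_empty_or_nonempty with rfl | hJ
    · have hw := Matrix.rank_le_card_width
        ((A⁻¹).submatrix (fun a : I => (a : Fin n))
          (fun b : (∅ : Finset (Fin n)) => (b : Fin n)))
      simp [Fintype.card_coe] at hw
      omega
    have hjm := J.min'_mem hJ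
    set jm : ℕ := ((J.min' hJ : Fin n) : ℕ) with hjmdef
    set t : ℕ := min (jm + p) n with ht
    set s : ℕ := t - p with hs
    have htn : t ≤ n := min_le_right _ _
    have hIt : ∀ i ∈ I, (i : ℕ) < t := by
      intro i hi
      have h1 := hIJ i hi (J.min' hJ) hjm
      have h2 := i.isLt
      omega
    have hJt : ∀ j ∈ J, s ≤ (j : ℕ) := by
      intro j hj
      have h1 : jm ≤ (j : ℕ) := Fin.le_def.mp (J.min'_le j hj)
      omega
    have step1 : ((A⁻¹).submatrix (fun a : I => (a : Fin n)) (fun b : J => (b : Fin n))).rank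
        ≤ ((A⁻¹).submatrix (fun a : {i : Fin n // (i : ℕ) < t} => (a : Fin n))
            (fun b : {j : Fin n // s ≤ (j : ℕ)} => (b : Fin n))).rank := by
      have eq1 : (A⁻¹).submatrix (fun a : I => (a : Fin n)) (fun b : J => (b : Fin n))
          = ((A⁻¹).submatrix (fun a : {i : Fin n // (i : ℕ) < t} => (a : Fin n))
              (fun b : {j : Fin n // s ≤ (j : ℕ)} => (b : Fin n))).submatrix
              (fun a : I => (⟨(a : Fin n), hIt a a.2⟩ : {i : Fin n // (i : ℕ) < t}))
              (fun b : J => (⟨(b : Fin n), hJt b b.2⟩ : {j : Fin n // s ≤ (j : ℕ)})) := rfl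
      rw [eq1]
      exact rank_submatrix_le' _ _ _
    have step2 := key_identity A hA s t
    have step3 : (A.submatrix (fun a : {i : Fin n // (i : ℕ) < s} => (a : Fin n))
        (fun b : {j : Fin n // t ≤ (j : ℕ)} => (b : Fin n))).rank < k := by
      have hcond : ∀ i ∈ Finset.univ.filter (fun i : Fin n => (i : ℕ) < s),
          ∀ j ∈ Finset.univ.filter (fun j : Fin n => t ≤ (j : ℕ)), (i : ℕ) + p < (j : ℕ) := by
        intro i hi j hj
        rw [Finset.mem_filter] at hi hj
        omega
      have happ := h _ _ hcond
      refine lt_of_le_of_lt ?_ happ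
      have eq2 : A.submatrix (fun a : {i : Fin n // (i : ℕ) < s} => (a : Fin n))
            (fun b : {j : Fin n // t ≤ (j : ℕ)} => (b : Fin n))
          = (A.submatrix
              (fun a : (Finset.univ.filter (fun i : Fin n => (i : ℕ) < s)) => (a : Fin n))
              (fun b : (Finset.univ.filter (fun j : Fin n => t ≤ (j : ℕ))) => (b : Fin n))).submatrix
              (fun a : {i : Fin n // (i : ℕ) < s} =>
                (⟨(a : Fin n), by simp [a.2]⟩ : (Finset.univ.filter (fun i : Fin n => (i : ℕ) < s))))
              (fun b : {j : Fin n // t ≤ (j : ℕ)} =>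
                (⟨(b : Fin n), by simp [b.2]⟩ : (Finset.univ.filter (fun j : Fin n => t ≤ (j : ℕ))))) := rfl
      rw [eq2]
      exact rank_submatrix_le' _ _ _
    have c1 : Fintype.card {i : Fin n // t ≤ (i : ℕ)} = n - t := card_ge_eq t htn
    have c2 : Fintype.card {j : Fin n // s ≤ (j : ℕ)} = n - s := card_ge_eq s (by omega)
    rw [c1, c2] at step2
    omega
  · -- (ii) → (i)
    intro h I J hIJ
    rcases I.eq_empty_or_nonempty with rfl | hI
    · have hw := Matrix.rank_le_card_height
        (A.submatrix (fun a : (∅ : Finset (Fin n)) => (a : Fin n)) (fun b : J => (b : Fin n)))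
      simp [Fintype.card_coe] at hw
      omega
    rcases J.eq_empty_or_nonempty with rfl | hJ
    · have hw := Matrix.rank_le_card_width
        (A.submatrix (fun a : I => (a : Fin n)) (fun b : (∅ : Finset (Fin n)) => (b : Fin n)))
      simp [Fintype.card_coe] at hw
      omega
    have hjm := J.min'_mem hJ
    set jm : ℕ := ((J.min' hJ : Fin n) : ℕ) with hjmdef
    obtain ⟨i0, hi0⟩ := hI
    have hpj : p < jm := by
      have := hIJ i0 hi0 (J.min' hJ) hjm
      omega
    set t : ℕ := jm with ht
    set s : ℕ := jm - p with hs
    have htn : t ≤ n := le_of_lt (J.min' hJ).isLt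
    have hIs : ∀ i ∈ I, (i : ℕ) < s := by
      intro i hi
      have := hIJ i hi (J.min' hJ) hjm
      omega
    have hJs : ∀ j ∈ J, t ≤ (j : ℕ) := fun j hj => Fin.le_def.mp (J.min'_le j hj)
    have step1 : (A.submatrix (fun a : I => (a : Fin n)) (fun b : J => (b : Fin n))).rank
        ≤ (A.submatrix (fun a : {i : Fin n // (i : ℕ) < s} => (a : Fin n))
            (fun b : {j : Fin n // t ≤ (j : ℕ)} => (b : Fin n))).rank := by
      have eq1 : A.submatrix (fun a : I => (a : Fin n)) (fun b : J => (b : Fin n))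
          = (A.submatrix (fun a : {i : Fin n // (i : ℕ) < s} => (a : Fin n))
              (fun b : {j : Fin n // t ≤ (j : ℕ)} => (b : Fin n))).submatrix
              (fun a : I => (⟨(a : Fin n), hIs a a.2⟩ : {i : Fin n // (i : ℕ) < s}))
              (fun b : J => (⟨(b : Fin n), hJs b b.2⟩ : {j : Fin n // t ≤ (j : ℕ)})) := rfl
      rw [eq1]
      exact rank_submatrix_le' _ _ _
    have step2 := key_identity A hA s t
    have step3 : ((A⁻¹).submatrix (fun a : {i : Fin n // (i : ℕ) < t} => (a : Fin n))
        (fun b : {j : Fin n // s ≤ (j : ℕ)} => (b : Fin n))).rank < p + k := by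
      have hcond : ∀ i ∈ Finset.univ.filter (fun i : Fin n => (i : ℕ) < t),
          ∀ j ∈ Finset.univ.filter (fun j : Fin n => s ≤ (j : ℕ)), (i : ℕ) < (j : ℕ) + p := by
        intro i hi j hj
        rw [Finset.mem_filter] at hi hj
        omega
      have happ := h _ _ hcond
      refine lt_of_le_of_lt ?_ happ
      have eq2 : (A⁻¹).submatrix (fun a : {i : Fin n // (i : ℕ) < t} => (a : Fin n))
            (fun b : {j : Fin n // s ≤ (j : ℕ)} => (b : Fin n))
          = ((A⁻¹).submatrix
              (fun a : (Finset.univ.filter (fun i : Fin n => (i : ℕ) < t)) => (a : Fin n))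
              (fun b : (Finset.univ.filter (fun j : Fin n => s ≤ (j : ℕ))) => (b : Fin n))).submatrix
              (fun a : {i : Fin n // (i : ℕ) < t} =>
                (⟨(a : Fin n), by simp [a.2]⟩ : (Finset.univ.filter (fun i : Fin n => (i : ℕ) < t))))
              (fun b : {j : Fin n // s ≤ (j : ℕ)} =>
                (⟨(b : Fin n), by simp [b.2]⟩ : (Finset.univ.filter (fun j : Fin n => s ≤ (j : ℕ))))) := rfl
      rw [eq2]
      exact rank_submatrix_le' _ _ _
    have c1 : Fintype.card {i : Fin n // t ≤ (i : ℕ)} = n - t := card_ge_eq t htn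
    have c2 : Fintype.card {j : Fin n // s ≤ (j : ℕ)} = n - s := card_ge_eq s (by omega)
    rw [c1, c2] at step2
    omega
end
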